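/- arXiv:2310.04396 — 6 statements merged into one kernel-verified Lean document; each statement's English description precedes it below -/
import Mathlib

section
/- Let g ∈ H. For every multiindex α ∈ (ℤ_{≥0})^m and every x ∈ ℝ^m, the iterated partial derivative D^α g(x) satisfies the parameter shift rule D^α g(x) = 2^{−|α|} Σ_{𝔦 ∈ {−1,1}^{|α|}} 𝔦^{(1,…,1)} · g(x + p_{α,𝔦}). -/
open scoped Real BigOperators
open MeasureTheory Filter

noncomputable section

/-- The frequency grid `{-1,0,1}^m`. -/
def Omega (m : ℕ) : Finset (Fin m → ℤ) :=
  Fintype.piFinset fun _ => ({-1, 0, 1} : Finset ℤ)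

/-- `ω ⬝ x = Σ_j ω_j x_j`. -/
def dotZ {m : ℕ} (ω : Fin m → ℤ) (x : Fin m → ℝ) : ℝ := ∑ j, (ω j : ℝ) * x j

/-- The kernel `K(x,z) = (2π)^{-m} Σ_{ω∈{-1,0,1}^m} e^{i ω·(x-z)}` (a real number). -/
def Kker (m : ℕ) (x z : Fin m → ℝ) : ℝ :=
  ((2 * Real.pi) ^ m)⁻¹ *
    (∑ ω ∈ Omega m, Complex.exp (Complex.I * (dotZ ω (x - z) : ℝ))).re

/-- `K_x = K(x, ·)`. -/
def Kfun (m : ℕ) (x : Fin m → ℝ) : (Fin m → ℝ) → ℝ := fun z => Kker m x z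

/-- The space `H` of real functions of the form `Σ_{ω∈{-1,0,1}^m} c_ω e^{i ω·z}`
with `c_{-ω} = conj (c_ω)`. -/
def Hset (m : ℕ) : Set ((Fin m → ℝ) → ℝ) :=
  { g | ∃ c : (Fin m → ℤ) → ℂ,
      (∀ ω, c (-ω) = starRingEnd ℂ (c ω)) ∧
      ∀ z, (g z : ℂ) = ∑ ω ∈ Omega m, c ω * Complex.exp (Complex.I * (dotZ ω z : ℝ)) }

/-- The cube `[-π,π]^m`. -/
def box (m : ℕ) : Set (Fin m → ℝ) := Set.univ.pi fun _ => Set.Icc (-Real.pi) Real.pi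

/-- Inner product `⟨g₁,g₂⟩_H = ∫_{[-π,π]^m} g₁ g₂`. -/
def innerH (m : ℕ) (g₁ g₂ : (Fin m → ℝ) → ℝ) : ℝ := ∫ z in box m, g₁ z * g₂ z

/-- Partial derivative in direction `j`. -/
def partialD {m : ℕ} (j : Fin m) (g : (Fin m → ℝ) → ℝ) : (Fin m → ℝ) → ℝ :=
  fun x => fderiv ℝ g x (Pi.single j 1)

/-- Iterated partial derivative `D^α`. -/
def Dmulti {m : ℕ} (α : Fin m → ℕ) (g : (Fin m → ℝ) → ℝ) : (Fin m → ℝ) → ℝ :=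
  (List.finRange m).foldr (fun j h => (partialD j)^[α j] h) g

/-- The index set `{-1,1}^{|α|}`, with entries indexed as `𝔦_{j,k}`, `j : Fin m`, `k : Fin (α j)`. -/
def ShiftSet {m : ℕ} (α : Fin m → ℕ) : Finset (∀ j : Fin m, Fin (α j) → ℤ) :=
  Fintype.piFinset fun j => Fintype.piFinset fun _ => ({-1, 1} : Finset ℤ)

/-- The product `𝔦^{(1,…,1)}` of all entries of `𝔦`. -/
def signProd {m : ℕ} (α : Fin m → ℕ) (ε : ∀ j : Fin m, Fin (α j) → ℤ) : ℝ :=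
  ∏ j, ∏ k, ((ε j k : ℤ) : ℝ)

/-- The shifted point `p_{α,𝔦}`, with `j`-th coordinate `(π/2)·((Σ_k 𝔦_{j,k}) mod 4)`,
the representative mod 4 taken in `{0,1,2,3}`. -/
def pshift {m : ℕ} (α : Fin m → ℕ) (ε : ∀ j : Fin m, Fin (α j) → ℤ) : Fin m → ℝ :=
  fun j => (Real.pi / 2) * (((∑ k, ε j k) % 4 : ℤ) : ℝ)

/-- The point of the grid `(π/2)·{-1,0,1}^m` coded by `s : Fin m → Fin 3`. -/
def pt3 (m : ℕ) (s : Fin m → Fin 3) : Fin m → ℝ :=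
  fun j => (Real.pi / 2) * (((s j : ℕ) : ℝ) - 1)

/-- The point of the grid `(π/2)·{0,1,2,3}^m` coded by `s : Fin m → Fin 4`. -/
def pt4 (m : ℕ) (s : Fin m → Fin 4) : Fin m → ℝ :=
  fun j => (Real.pi / 2) * ((s j : ℕ) : ℝ)

/-- The grid `(π/2)·{-1,0,1}^m ⊆ ℝ^m`. -/
def grid3 (m : ℕ) : Set (Fin m → ℝ) := Set.range (pt3 m)

/-- The grid `(π/2)·{0,1,2,3}^m ⊆ ℝ^m`. -/
def grid4 (m : ℕ) : Set (Fin m → ℝ) := Set.range (pt4 m)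

/-- `I_d`: points of `ℝ^m` with at most `d` nonzero coordinates. -/
def Iset (m d : ℕ) : Set (Fin m → ℝ) := { z | Set.ncard { j : Fin m | z j ≠ 0 } ≤ d }

/-- Multiindices `α ∈ (ℤ_{≥0})^m` with `|α| ≤ L`, as a finset. -/
def multiIdx (m L : ℕ) : Finset (Fin m → ℕ) :=
  (Fintype.piFinset fun _ : Fin m => Finset.range (L + 1)).filter fun α => ∑ j, α j ≤ L

/-- The sup norm `‖g‖_∞ = sup_z |g(z)|`. -/
def supNorm (m : ℕ) (g : (Fin m → ℝ) → ℝ) : ℝ := ⨆ z : Fin m → ℝ, |g z|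

/-- The norm `‖g‖_H = √⟨g,g⟩_H`. -/
def normH (m : ℕ) (g : (Fin m → ℝ) → ℝ) : ℝ := Real.sqrt (innerH m g g)

end

namespace PSR
open Complex

variable {m : ℕ}

/-- `g` is represented by coefficients `c`. -/
def Rep (m : ℕ) (g : (Fin m → ℝ) → ℝ) (c : (Fin m → ℤ) → ℂ) : Prop :=
  (∀ ω, c (-ω) = starRingEnd ℂ (c ω)) ∧
  ∀ z, (g z : ℂ) = ∑ ω ∈ Omega m, c ω * Complex.exp (Complex.I * (dotZ ω z : ℝ))

lemma neg_mem_Omega {ω : Fin m → ℤ} (h : ω ∈ Omega m) : -ω ∈ Omega m := by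
  simp only [Omega, Fintype.mem_piFinset, Finset.mem_insert, Finset.mem_singleton] at h ⊢
  intro j
  rcases h j with h | h | h <;> simp [Pi.neg_apply, h]

lemma dotZ_neg (ω : Fin m → ℤ) (z : Fin m → ℝ) : dotZ (-ω) z = - dotZ ω z := by
  simp [dotZ, ← Finset.sum_neg_distrib]

lemma dotZ_add (ω : Fin m → ℤ) (x y : Fin m → ℝ) : dotZ ω (x + y) = dotZ ω x + dotZ ω y := by
  simp [dotZ, mul_add, Finset.sum_add_distrib]

lemma conj_sum (c : (Fin m → ℤ) → ℂ) (hc : ∀ ω, c (-ω) = starRingEnd ℂ (c ω)) (z : Fin m → ℝ) :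
    starRingEnd ℂ (∑ ω ∈ Omega m, c ω * Complex.exp (Complex.I * (dotZ ω z : ℝ)))
      = ∑ ω ∈ Omega m, c ω * Complex.exp (Complex.I * (dotZ ω z : ℝ)) := by
  rw [map_sum]
  refine Finset.sum_nbij' (i := fun ω => -ω) (j := fun ω => -ω) ?_ ?_ ?_ ?_ ?_
  · intro ω hω; exact neg_mem_Omega hω
  · intro ω hω; exact neg_mem_Omega hω
  · intro ω _; simp
  · intro ω _; simp
  · intro ω _
    rw [map_mul, ← hc ω, ← Complex.exp_conj]
    congr 1
    rw [map_mul, Complex.conj_I, Complex.conj_ofReal, dotZ_neg]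
    push_cast
    ring

lemma re_sum_eq (c : (Fin m → ℤ) → ℂ) (hc : ∀ ω, c (-ω) = starRingEnd ℂ (c ω)) (z : Fin m → ℝ) :
    (((∑ ω ∈ Omega m, c ω * Complex.exp (Complex.I * (dotZ ω z : ℝ))).re : ℝ) : ℂ)
      = ∑ ω ∈ Omega m, c ω * Complex.exp (Complex.I * (dotZ ω z : ℝ)) :=
  Complex.conj_eq_iff_re.mp (conj_sum c hc z)

/-- `dotZ ω` as a continuous linear map. -/
noncomputable def dotCLM (m : ℕ) (ω : Fin m → ℤ) : (Fin m → ℝ) →L[ℝ] ℝ :=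
  ∑ j, (ω j : ℝ) • ContinuousLinearMap.proj j

lemma dotCLM_apply (ω : Fin m → ℤ) (z : Fin m → ℝ) : dotCLM m ω z = dotZ ω z := by
  simp [dotCLM, dotZ, ContinuousLinearMap.sum_apply, ContinuousLinearMap.proj_apply]

lemma dotCLM_single (ω : Fin m → ℤ) (j : Fin m) : dotCLM m ω (Pi.single j 1) = (ω j : ℝ) := by
  rw [dotCLM_apply]
  simp [dotZ, Pi.single_apply, mul_ite]

lemma hasFDerivAt_exp_dot (ω : Fin m → ℤ) (z : Fin m → ℝ) :
    HasFDerivAt (fun z : Fin m → ℝ => Complex.exp (Complex.I * (dotZ ω z : ℝ)))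
      ((Complex.exp (Complex.I * (dotZ ω z : ℝ)) * Complex.I) •
        (Complex.ofRealCLM.comp (dotCLM m ω))) z := by
  have h0 := (Complex.ofRealCLM.comp (dotCLM m ω)).hasFDerivAt (x := z)
  have heq : ⇑(Complex.ofRealCLM.comp (dotCLM m ω))
      = fun y : Fin m → ℝ => ((dotZ ω y : ℝ) : ℂ) := by
    funext y; simp [dotCLM_apply]
  rw [heq] at h0
  have h1 := h0.const_mul Complex.I
  have h2 := (Complex.hasDerivAt_exp (Complex.I * (dotZ ω z : ℝ))).comp_hasFDerivAt z h1
  rw [smul_smul] at h2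
  exact h2

lemma rep_hasFDerivAt {g : (Fin m → ℝ) → ℝ} {c : (Fin m → ℤ) → ℂ} (hg : Rep m g c)
    (x : Fin m → ℝ) :
    HasFDerivAt g (Complex.reCLM.comp (∑ ω ∈ Omega m,
      c ω • ((Complex.exp (Complex.I * (dotZ ω x : ℝ)) * Complex.I) •
        (Complex.ofRealCLM.comp (dotCLM m ω))))) x := by
  have hF : HasFDerivAt (fun z : Fin m → ℝ =>
      ∑ ω ∈ Omega m, c ω * Complex.exp (Complex.I * (dotZ ω z : ℝ)))
      (∑ ω ∈ Omega m, c ω • ((Complex.exp (Complex.I * (dotZ ω x : ℝ)) * Complex.I) •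
        (Complex.ofRealCLM.comp (dotCLM m ω)))) x :=
    HasFDerivAt.fun_sum (fun ω _ => (hasFDerivAt_exp_dot ω x).const_mul (c ω))
  have hgF := Complex.reCLM.hasFDerivAt.comp x hF
  have hgeq : g = fun z : Fin m → ℝ =>
      (∑ ω ∈ Omega m, c ω * Complex.exp (Complex.I * (dotZ ω z : ℝ))).re := by
    funext z
    have := congrArg Complex.re (hg.2 z)
    simpa using this
  rw [hgeq]
  exact hgF

lemma partialD_rep {g : (Fin m → ℝ) → ℝ} {c : (Fin m → ℤ) → ℂ} (hg : Rep m g c) (j : Fin m) :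
    Rep m (partialD j g) (fun ω => Complex.I * ((ω j : ℤ) : ℂ) * c ω) := by
  have hconj : ∀ ω : Fin m → ℤ,
      Complex.I * (((-ω) j : ℤ) : ℂ) * c (-ω)
        = starRingEnd ℂ (Complex.I * ((ω j : ℤ) : ℂ) * c ω) := by
    intro ω
    rw [hg.1 ω]
    simp only [map_mul, Complex.conj_I, Pi.neg_apply, map_intCast]
    push_cast
    ring
  refine ⟨hconj, ?_⟩
  intro x
  have hval : partialD j g x
      = (∑ ω ∈ Omega m, (Complex.I * ((ω j : ℤ) : ℂ) * c ω)
          * Complex.exp (Complex.I * (dotZ ω x : ℝ))).re := by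
    have hD := rep_hasFDerivAt hg x
    have hfd := hD.fderiv
    unfold partialD
    rw [hfd]
    rw [ContinuousLinearMap.comp_apply, ContinuousLinearMap.sum_apply, Complex.reCLM_apply]
    congr 1
    refine Finset.sum_congr rfl (fun ω _ => ?_)
    simp only [ContinuousLinearMap.smul_apply, ContinuousLinearMap.coe_comp',
      Function.comp_apply, Complex.ofRealCLM_apply, dotCLM_single, smul_eq_mul]
    push_cast
    ring
  rw [hval]
  exact re_sum_eq _ hconj x

lemma iter_rep (j : Fin m) (n : ℕ) :
    ∀ (g : (Fin m → ℝ) → ℝ) (c : (Fin m → ℤ) → ℂ), Rep m g c →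
      Rep m ((partialD j)^[n] g) (fun ω => (Complex.I * ((ω j : ℤ) : ℂ)) ^ n * c ω) := by
  induction n with
  | zero =>
      intro g c h
      simpa using h
  | succ n ih =>
      intro g c h
      rw [Function.iterate_succ_apply]
      have h2 := ih (partialD j g) _ (partialD_rep h j)
      have hcc : (fun ω : Fin m → ℤ => (Complex.I * ((ω j : ℤ) : ℂ)) ^ (n + 1) * c ω)
          = fun ω : Fin m → ℤ =>
            (Complex.I * ((ω j : ℤ) : ℂ)) ^ n * (Complex.I * ((ω j : ℤ) : ℂ) * c ω) := by
        funext ω; ring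
      rw [hcc]
      exact h2

lemma foldr_rep (α : Fin m → ℕ) (l : List (Fin m)) (g : (Fin m → ℝ) → ℝ)
    (c : (Fin m → ℤ) → ℂ) (h : Rep m g c) :
    Rep m (l.foldr (fun j h => (partialD j)^[α j] h) g)
      (fun ω => (l.map (fun j => (Complex.I * ((ω j : ℤ) : ℂ)) ^ (α j))).prod * c ω) := by
  induction l with
  | nil => simpa using h
  | cons j l ih =>
      rw [List.foldr_cons]
      have h2 := iter_rep j (α j) _ _ ih
      have hcc : (fun ω : Fin m → ℤ =>
          ((List.map (fun j => (Complex.I * ((ω j : ℤ) : ℂ)) ^ α j) (j :: l)).prod * c ω))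
          = fun ω : Fin m → ℤ => (Complex.I * ((ω j : ℤ) : ℂ)) ^ (α j) *
              ((List.map (fun j => (Complex.I * ((ω j : ℤ) : ℂ)) ^ α j) l).prod * c ω) := by
        funext ω
        rw [List.map_cons, List.prod_cons]
        ring
      rw [hcc]
      exact h2

lemma Dmulti_rep (α : Fin m → ℕ) (g : (Fin m → ℝ) → ℝ) (c : (Fin m → ℤ) → ℂ)
    (h : Rep m g c) :
    Rep m (Dmulti α g)
      (fun ω => (∏ j, (Complex.I * ((ω j : ℤ) : ℂ)) ^ (α j)) * c ω) := by
  have := foldr_rep α (List.finRange m) g c h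
  unfold Dmulti
  have hcc : (fun ω : Fin m → ℤ => (∏ j, (Complex.I * ((ω j : ℤ) : ℂ)) ^ (α j)) * c ω)
      = fun ω : Fin m → ℤ =>
        ((List.finRange m).map (fun j => (Complex.I * ((ω j : ℤ) : ℂ)) ^ (α j))).prod * c ω := by
    funext ω
    rw [Fin.prod_univ_def]
  rw [hcc]
  exact this

end PSR


namespace PSR

lemma key_exp (w : ℤ) (hw : w = -1 ∨ w = 0 ∨ w = 1) :
    ∑ e ∈ ({-1, 1} : Finset ℤ),
        (e : ℂ) * Complex.exp (Complex.I * (w : ℂ) * ((Real.pi : ℂ) / 2) * (e : ℂ))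
      = 2 * Complex.I * (w : ℂ) := by
  have hpi : Complex.exp (((Real.pi : ℂ) / 2) * Complex.I) = Complex.I := by
    have : ((Real.pi : ℂ) / 2) = ((Real.pi / 2 : ℝ) : ℂ) := by push_cast; ring
    rw [this, Complex.exp_mul_I, ← Complex.ofReal_cos, ← Complex.ofReal_sin,
      Real.cos_pi_div_two, Real.sin_pi_div_two]
    simp
  have hpin : Complex.exp (-(((Real.pi : ℂ) / 2) * Complex.I)) = -Complex.I := by
    rw [Complex.exp_neg, hpi, Complex.inv_I]
  rw [Finset.sum_insert (by decide), Finset.sum_singleton]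
  rcases hw with h | h | h <;> subst h
  · have e1 : Complex.I * ((-1 : ℤ) : ℂ) * ((Real.pi : ℂ) / 2) * ((-1 : ℤ) : ℂ)
        = ((Real.pi : ℂ) / 2) * Complex.I := by push_cast; ring
    have e2 : Complex.I * ((-1 : ℤ) : ℂ) * ((Real.pi : ℂ) / 2) * ((1 : ℤ) : ℂ)
        = -(((Real.pi : ℂ) / 2) * Complex.I) := by push_cast; ring
    rw [e1, e2, hpi, hpin]
    push_cast; ring
  · norm_num
  · have e1 : Complex.I * ((1 : ℤ) : ℂ) * ((Real.pi : ℂ) / 2) * ((-1 : ℤ) : ℂ)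
        = -(((Real.pi : ℂ) / 2) * Complex.I) := by push_cast; ring
    have e2 : Complex.I * ((1 : ℤ) : ℂ) * ((Real.pi : ℂ) / 2) * ((1 : ℤ) : ℂ)
        = ((Real.pi : ℂ) / 2) * Complex.I := by push_cast; ring
    rw [e1, e2, hpi, hpin]
    push_cast; ring

lemma exp_mod4 (w S : ℤ) :
    Complex.exp (Complex.I * (w : ℂ) * ((Real.pi : ℂ) / 2) * ((S % 4 : ℤ) : ℂ))
      = Complex.exp (Complex.I * (w : ℂ) * ((Real.pi : ℂ) / 2) * (S : ℂ)) := by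
  have hS := congrArg (fun t : ℤ => (t : ℂ)) (Int.emod_add_mul_ediv S 4)
  simp only [Int.cast_add, Int.cast_mul, Int.cast_ofNat] at hS
  rw [← hS]
  push_cast
  rw [mul_add, Complex.exp_add]
  have h4 : Complex.I * (w : ℂ) * ((Real.pi : ℂ) / 2) * (4 * ((S / 4 : ℤ) : ℂ))
      = ((w * (S / 4) : ℤ) : ℂ) * (2 * (Real.pi : ℂ) * Complex.I) := by
    push_cast; ring
  rw [h4, Complex.exp_int_mul_two_pi_mul_I, mul_one]

lemma shift_sum_eq {m : ℕ} (α : Fin m → ℕ) (ω : Fin m → ℤ) (hω : ω ∈ Omega m) :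
    ∑ ε ∈ ShiftSet α, ((signProd α ε : ℝ) : ℂ)
        * Complex.exp (Complex.I * ((dotZ ω (pshift α ε) : ℝ) : ℂ))
      = (2 : ℂ) ^ (∑ j, α j) * ∏ j, (Complex.I * ((ω j : ℤ) : ℂ)) ^ (α j) := by
  have hterm : ∀ ε ∈ ShiftSet α,
      ((signProd α ε : ℝ) : ℂ) * Complex.exp (Complex.I * ((dotZ ω (pshift α ε) : ℝ) : ℂ))
        = ∏ j, ∏ k, (((ε j k : ℤ) : ℂ)
            * Complex.exp (Complex.I * ((ω j : ℤ) : ℂ) * ((Real.pi : ℂ) / 2) * ((ε j k : ℤ) : ℂ))) := by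
    intro ε _
    have hdot : Complex.I * ((dotZ ω (pshift α ε) : ℝ) : ℂ)
        = ∑ j, Complex.I * ((ω j : ℤ) : ℂ) * ((Real.pi : ℂ) / 2) * (((∑ k, ε j k) % 4 : ℤ) : ℂ) := by
      have : ((dotZ ω (pshift α ε) : ℝ) : ℂ)
          = ∑ j, ((ω j : ℤ) : ℂ) * (((Real.pi : ℂ) / 2) * (((∑ k, ε j k) % 4 : ℤ) : ℂ)) := by
        simp only [dotZ, pshift]
        push_cast
        exact Finset.sum_congr rfl fun j _ => by ring
      rw [this, Finset.mul_sum]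
      exact Finset.sum_congr rfl fun j _ => by ring
    have h1 : Complex.exp (Complex.I * ((dotZ ω (pshift α ε) : ℝ) : ℂ))
        = ∏ j, ∏ k, Complex.exp (Complex.I * ((ω j : ℤ) : ℂ) * ((Real.pi : ℂ) / 2) * ((ε j k : ℤ) : ℂ)) := by
      rw [hdot, Complex.exp_sum]
      refine Finset.prod_congr rfl fun j _ => ?_
      rw [exp_mod4]
      have : Complex.I * ((ω j : ℤ) : ℂ) * ((Real.pi : ℂ) / 2) * (((∑ k, ε j k) : ℤ) : ℂ)
          = ∑ k, Complex.I * ((ω j : ℤ) : ℂ) * ((Real.pi : ℂ) / 2) * ((ε j k : ℤ) : ℂ) := by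
        push_cast
        rw [Finset.mul_sum]
      rw [this, Complex.exp_sum]
    have h2 : ((signProd α ε : ℝ) : ℂ) = ∏ j, ∏ k, ((ε j k : ℤ) : ℂ) := by
      simp only [signProd]
      push_cast
      rfl
    rw [h1, h2, ← Finset.prod_mul_distrib]
    exact Finset.prod_congr rfl fun j _ => by rw [← Finset.prod_mul_distrib]
  rw [Finset.sum_congr rfl hterm, ShiftSet]
  rw [← Finset.prod_univ_sum (fun j : Fin m => Fintype.piFinset fun _ : Fin (α j) => ({-1, 1} : Finset ℤ))
    (fun j v => ∏ k, ((v k : ℤ) : ℂ)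
      * Complex.exp (Complex.I * ((ω j : ℤ) : ℂ) * ((Real.pi : ℂ) / 2) * ((v k : ℤ) : ℂ)))]
  have hj : ∀ j : Fin m,
      ∑ v ∈ Fintype.piFinset (fun _ : Fin (α j) => ({-1, 1} : Finset ℤ)),
          ∏ k, ((v k : ℤ) : ℂ)
            * Complex.exp (Complex.I * ((ω j : ℤ) : ℂ) * ((Real.pi : ℂ) / 2) * ((v k : ℤ) : ℂ))
        = (2 * Complex.I * ((ω j : ℤ) : ℂ)) ^ (α j) := by
    intro j
    rw [← Finset.prod_univ_sum (fun _ : Fin (α j) => ({-1, 1} : Finset ℤ))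
      (fun _ e => ((e : ℤ) : ℂ)
        * Complex.exp (Complex.I * ((ω j : ℤ) : ℂ) * ((Real.pi : ℂ) / 2) * ((e : ℤ) : ℂ)))]
    have hωj : ω j = -1 ∨ ω j = 0 ∨ ω j = 1 := by
      have := Fintype.mem_piFinset.mp hω j
      simp only [Finset.mem_insert, Finset.mem_singleton] at this
      tauto
    rw [Finset.prod_congr rfl (fun k _ => key_exp (ω j) hωj), Finset.prod_const]
    simp
  rw [Finset.prod_congr rfl (fun j _ => hj j)]
  have : ∀ j : Fin m, (2 * Complex.I * ((ω j : ℤ) : ℂ)) ^ (α j)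
      = 2 ^ (α j) * (Complex.I * ((ω j : ℤ) : ℂ)) ^ (α j) := by
    intro j
    rw [mul_assoc, mul_pow]
  rw [Finset.prod_congr rfl (fun j _ => this j), Finset.prod_mul_distrib,
    Finset.prod_pow_eq_pow_sum]

end PSR


/-- the parameter shift rule
`D^α g(x) = 2^{-|α|} Σ_{𝔦 ∈ {-1,1}^{|α|}} 𝔦^{(1,…,1)} g(x + p_{α,𝔦})`. -/
theorem parameter_shift_rule (m : ℕ) (hm : 0 < m)
    (g : (Fin m → ℝ) → ℝ) (hg : g ∈ Hset m) (α : Fin m → ℕ) (x : Fin m → ℝ) :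
    Dmulti α g x =
      (1 / 2 ^ (∑ j, α j)) * ∑ ε ∈ ShiftSet α, signProd α ε * g (x + pshift α ε) := by
  obtain ⟨c, hc1, hc2⟩ := hg
  have hrep := PSR.Dmulti_rep α g c ⟨hc1, hc2⟩
  have key : ∑ ε ∈ ShiftSet α, ((signProd α ε : ℝ) : ℂ) * ((g (x + pshift α ε) : ℝ) : ℂ)
      = (2 : ℂ) ^ (∑ j, α j) * ∑ ω ∈ Omega m,
          ((∏ j, (Complex.I * ((ω j : ℤ) : ℂ)) ^ (α j)) * c ω)
            * Complex.exp (Complex.I * ((dotZ ω x : ℝ) : ℂ)) := by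
    have step0 : ∀ ε ∈ ShiftSet α,
        ((signProd α ε : ℝ) : ℂ) * ((g (x + pshift α ε) : ℝ) : ℂ)
          = ∑ ω ∈ Omega m, ((signProd α ε : ℝ) : ℂ)
              * (c ω * (Complex.exp (Complex.I * ((dotZ ω x : ℝ) : ℂ))
                  * Complex.exp (Complex.I * ((dotZ ω (pshift α ε) : ℝ) : ℂ)))) := by
      intro ε _
      rw [hc2 (x + pshift α ε), Finset.mul_sum]
      refine Finset.sum_congr rfl fun ω _ => ?_
      rw [PSR.dotZ_add]
      push_cast
      rw [mul_add, Complex.exp_add]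
    rw [Finset.sum_congr rfl step0, Finset.sum_comm]
    have step1 : ∀ ω ∈ Omega m,
        (∑ ε ∈ ShiftSet α, ((signProd α ε : ℝ) : ℂ)
            * (c ω * (Complex.exp (Complex.I * ((dotZ ω x : ℝ) : ℂ))
                * Complex.exp (Complex.I * ((dotZ ω (pshift α ε) : ℝ) : ℂ)))))
          = (c ω * Complex.exp (Complex.I * ((dotZ ω x : ℝ) : ℂ)))
              * ∑ ε ∈ ShiftSet α, ((signProd α ε : ℝ) : ℂ)
                  * Complex.exp (Complex.I * ((dotZ ω (pshift α ε) : ℝ) : ℂ)) := by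
      intro ω _
      rw [Finset.mul_sum]
      exact Finset.sum_congr rfl fun ε _ => by ring
    rw [Finset.sum_congr rfl step1]
    rw [Finset.sum_congr rfl (fun ω hω => by rw [PSR.shift_sum_eq α ω hω])]
    rw [Finset.mul_sum]
    exact Finset.sum_congr rfl fun ω _ => by ring
  have keyre := congrArg Complex.re key
  rw [Complex.re_sum] at keyre
  have hL : ∀ ε ∈ ShiftSet α,
      (((signProd α ε : ℝ) : ℂ) * ((g (x + pshift α ε) : ℝ) : ℂ)).re
        = signProd α ε * g (x + pshift α ε) := by
    intro ε _
    rw [← Complex.ofReal_mul, Complex.ofReal_re]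
  rw [Finset.sum_congr rfl hL] at keyre
  have h2N : (2 : ℂ) ^ (∑ j, α j) = (((2 : ℝ) ^ (∑ j, α j) : ℝ) : ℂ) := by
    push_cast
    ring
  rw [h2N, Complex.re_ofReal_mul] at keyre
  have hDval : Dmulti α g x
      = (∑ ω ∈ Omega m, ((∏ j, (Complex.I * ((ω j : ℤ) : ℂ)) ^ (α j)) * c ω)
          * Complex.exp (Complex.I * ((dotZ ω x : ℝ) : ℂ))).re := by
    have := congrArg Complex.re (hrep.2 x)
    simpa using this
  rw [← hDval] at keyre
  have hpow : (0 : ℝ) < 2 ^ (∑ j, α j) := by positivity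
  rw [keyre]
  field_simp
end

section
/- Let g ∈ H. Then for every x ∈ ℝ^m, g(x) = Σ_{k=0}^{∞} Σ_{α ∈ (ℤ_{≥0})^m, |α| = k} (x^α / (α!·2^{|α|})) · ( Σ_{𝔦 ∈ {−1,1}^{|α|}} 𝔦^{(1,…,1)} · g(p_{α,𝔦}) ), where x^α = x₁^{α₁}⋯x_m^{α_m} and α! = α₁!⋯α_m!, and the outer series converges to g(x). -/
open scoped Real BigOperators
open MeasureTheory Filter

lemma factor_sum (w : ℤ) (hw : w ∈ ({-1, 0, 1} : Finset ℤ)) :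
    ∑ e ∈ ({-1, 1} : Finset ℤ),
      (e : ℂ) * Complex.exp (Complex.I * (w : ℂ) * ((Real.pi / 2 : ℝ) : ℂ) * (e : ℂ))
      = 2 * Complex.I * (w : ℂ) := by
  have e1 : Complex.exp (Complex.I * ((Real.pi : ℂ) / 2)) = Complex.I := by
    rw [mul_comm, Complex.exp_mul_I, Complex.cos_pi_div_two, Complex.sin_pi_div_two]
    ring
  have e2 : Complex.exp (-(Complex.I * ((Real.pi : ℂ) / 2))) = -Complex.I := by
    rw [Complex.exp_neg, e1, Complex.inv_I]
  rw [Finset.sum_pair (by decide : (-1 : ℤ) ≠ 1)]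
  fin_cases hw
  · push_cast
    rw [show Complex.I * (-1) * ((Real.pi : ℂ) / 2) * (-1) = Complex.I * ((Real.pi : ℂ) / 2) by ring,
        show Complex.I * (-1) * ((Real.pi : ℂ) / 2) * 1 = -(Complex.I * ((Real.pi : ℂ) / 2)) by ring,
        e1, e2]
    ring
  · push_cast
    simp
  · push_cast
    rw [show Complex.I * 1 * ((Real.pi : ℂ) / 2) * (-1) = -(Complex.I * ((Real.pi : ℂ) / 2)) by ring,
        show Complex.I * 1 * ((Real.pi : ℂ) / 2) * 1 = Complex.I * ((Real.pi : ℂ) / 2) by ring,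
        e1, e2]
    ring

lemma shift_sum {m : ℕ} (α : Fin m → ℕ) (ω : Fin m → ℤ) (hω : ω ∈ Omega m) :
    ∑ ε ∈ ShiftSet α, (signProd α ε : ℂ) *
        Complex.exp (Complex.I * ((dotZ ω (pshift α ε) : ℝ) : ℂ)) =
      ∏ j, (2 * Complex.I * (ω j : ℂ)) ^ α j := by
  have hterm : ∀ ε ∈ ShiftSet α, (signProd α ε : ℂ) *
      Complex.exp (Complex.I * ((dotZ ω (pshift α ε) : ℝ) : ℂ)) =
      ∏ j, ∏ k, ((ε j k : ℂ) *
        Complex.exp (Complex.I * (ω j : ℂ) * ((Real.pi / 2 : ℝ) : ℂ) * (ε j k : ℂ))) := by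
    intro ε _
    have hsign : (signProd α ε : ℂ) = ∏ j, ∏ k, (ε j k : ℂ) := by
      rw [signProd]; push_cast; rfl
    have h1 : Complex.I * ((dotZ ω (pshift α ε) : ℝ) : ℂ) =
        ∑ j, (Complex.I * (ω j : ℂ) * ((Real.pi / 2 : ℝ) : ℂ) *
          (((∑ k, ε j k) % 4 : ℤ) : ℂ)) := by
      simp only [dotZ, pshift]
      push_cast
      rw [Finset.mul_sum]
      exact Finset.sum_congr rfl fun j _ => by ring
    have hexp : Complex.exp (Complex.I * ((dotZ ω (pshift α ε) : ℝ) : ℂ)) =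
        ∏ j, ∏ k, Complex.exp (Complex.I * (ω j : ℂ) * ((Real.pi / 2 : ℝ) : ℂ) * (ε j k : ℂ)) := by
      rw [h1, Complex.exp_sum]
      refine Finset.prod_congr rfl fun j _ => ?_
      rw [← Complex.exp_sum]
      rw [Complex.exp_eq_exp_iff_exists_int]
      refine ⟨-(ω j) * ((∑ k, ε j k) / 4), ?_⟩
      have hsum : ∑ k, Complex.I * (ω j : ℂ) * ((Real.pi / 2 : ℝ) : ℂ) * (ε j k : ℂ)
          = Complex.I * (ω j : ℂ) * ((Real.pi / 2 : ℝ) : ℂ) * ∑ k, (ε j k : ℂ) := by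
        rw [Finset.mul_sum]
      have hmod : (((∑ k, ε j k) % 4 : ℤ) : ℂ) = (∑ k, (ε j k : ℂ)) - 4 * (((∑ k, ε j k) / 4 : ℤ) : ℂ) := by
        rw [Int.emod_def]
        push_cast
        ring
      rw [hsum, hmod]
      push_cast
      ring
    rw [hsign, hexp, ← Finset.prod_mul_distrib]
    exact Finset.prod_congr rfl fun j _ => (Finset.prod_mul_distrib).symm
  rw [Finset.sum_congr rfl hterm, ShiftSet]
  rw [← Finset.prod_univ_sum (fun j : Fin m => Fintype.piFinset fun _ : Fin (α j) => ({-1, 1} : Finset ℤ))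
    (fun j y => ∏ k, ((y k : ℂ) * Complex.exp (Complex.I * (ω j : ℂ) * ((Real.pi / 2 : ℝ) : ℂ) * (y k : ℂ))))]
  refine Finset.prod_congr rfl fun j _ => ?_
  rw [← Finset.prod_univ_sum (fun _ : Fin (α j) => ({-1, 1} : Finset ℤ))
    (fun _ e => ((e : ℂ) * Complex.exp (Complex.I * (ω j : ℂ) * ((Real.pi / 2 : ℝ) : ℂ) * (e : ℂ))))]
  have : ∀ k : Fin (α j), ∑ e ∈ ({-1, 1} : Finset ℤ),
      ((e : ℂ) * Complex.exp (Complex.I * (ω j : ℂ) * ((Real.pi / 2 : ℝ) : ℂ) * (e : ℂ)))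
      = 2 * Complex.I * (ω j : ℂ) := fun _ =>
    factor_sum (ω j) (by have := Fintype.mem_piFinset.mp (by rw [Omega] at hω; exact hω) j; exact this)
  rw [Finset.prod_congr rfl fun k _ => this k, Finset.prod_const, Finset.card_univ, Fintype.card_fin]

lemma multinom_div (m k : ℕ) (y : Fin m → ℂ) :
    ∑ α ∈ (Fintype.piFinset fun _ : Fin m => Finset.range (k + 1)).filter
        (fun α => ∑ j, α j = k),
      (∏ j, y j ^ α j) / ((∏ j, Nat.factorial (α j) : ℕ) : ℂ) = (∑ j, y j) ^ k / k.factorial := by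
  have hset : (Fintype.piFinset fun _ : Fin m => Finset.range (k + 1)).filter
      (fun α => ∑ j, α j = k) = Finset.piAntidiag Finset.univ k := by
    ext α
    simp only [Finset.mem_filter, Fintype.mem_piFinset, Finset.mem_range,
      Finset.mem_piAntidiag, Finset.mem_univ, implies_true, and_true, ne_eq]
    constructor
    · rintro ⟨-, h⟩; exact h
    · intro h
      exact ⟨fun j => Nat.lt_succ_of_le (h ▸ Finset.single_le_sum
        (fun _ _ => Nat.zero_le _) (Finset.mem_univ j)), h⟩
  rw [hset, Finset.sum_pow_eq_sum_piAntidiag, Finset.sum_div]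
  refine Finset.sum_congr rfl fun α hα => ?_
  rw [Finset.mem_piAntidiag] at hα
  have hfac : (∏ j, Nat.factorial (α j)) * Nat.multinomial Finset.univ α = k.factorial := by
    rw [← hα.1]; exact Nat.multinomial_spec _ _
  have h1' : (∏ j, ((α j).factorial : ℂ)) ≠ 0 :=
    Finset.prod_ne_zero_iff.2 fun j _ => Nat.cast_ne_zero.2 (Nat.factorial_pos _).ne'
  rw [eq_div_iff (Nat.cast_ne_zero.2 k.factorial_ne_zero : ((k.factorial : ℕ) : ℂ) ≠ 0),
    ← hfac]
  push_cast
  rw [div_mul_eq_mul_div, div_eq_iff h1']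
  ring

/-- the power series expansion of `g` via parameter shift values converges:
`g(x) = Σ_{k=0}^∞ Σ_{|α| = k} (x^α/(α! 2^{|α|})) Σ_{𝔦∈{-1,1}^{|α|}} 𝔦^{(1,…,1)} g(p_{α,𝔦})`. -/
theorem series_expansion_via_shifts (m : ℕ) (hm : 0 < m)
    (g : (Fin m → ℝ) → ℝ) (hg : g ∈ Hset m) (x : Fin m → ℝ) :
    Filter.Tendsto
      (fun N : ℕ => ∑ k ∈ Finset.range N,
        ∑ α ∈ (Fintype.piFinset fun _ : Fin m => Finset.range (k + 1)).filter
            (fun α => ∑ j, α j = k),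
          ((∏ j, x j ^ α j) / (((∏ j, Nat.factorial (α j) : ℕ) : ℝ) * 2 ^ (∑ j, α j))) *
            ∑ ε ∈ ShiftSet α, signProd α ε * g (pshift α ε))
      Filter.atTop (nhds (g x)) := by
  obtain ⟨c, hc, hgz⟩ := hg
  -- the inner shift-sum, complexified
  have hinner : ∀ α : Fin m → ℕ,
      ((∑ ε ∈ ShiftSet α, signProd α ε * g (pshift α ε) : ℝ) : ℂ) =
      ∑ ω ∈ Omega m, c ω * ∏ j, (2 * Complex.I * (ω j : ℂ)) ^ α j := by
    intro α
    have : ((∑ ε ∈ ShiftSet α, signProd α ε * g (pshift α ε) : ℝ) : ℂ)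
        = ∑ ε ∈ ShiftSet α, (signProd α ε : ℂ) * ((g (pshift α ε) : ℝ) : ℂ) := by
      push_cast; rfl
    rw [this]
    calc ∑ ε ∈ ShiftSet α, (signProd α ε : ℂ) * ((g (pshift α ε) : ℝ) : ℂ)
        = ∑ ε ∈ ShiftSet α, ∑ ω ∈ Omega m,
            c ω * ((signProd α ε : ℂ) * Complex.exp (Complex.I * ((dotZ ω (pshift α ε) : ℝ) : ℂ))) := by
          refine Finset.sum_congr rfl fun ε _ => ?_
          rw [hgz (pshift α ε), Finset.mul_sum]
          exact Finset.sum_congr rfl fun ω _ => by ring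
      _ = ∑ ω ∈ Omega m, c ω * ∑ ε ∈ ShiftSet α,
            (signProd α ε : ℂ) * Complex.exp (Complex.I * ((dotZ ω (pshift α ε) : ℝ) : ℂ)) := by
          rw [Finset.sum_comm]
          exact Finset.sum_congr rfl fun ω _ => (Finset.mul_sum _ _ _).symm
      _ = ∑ ω ∈ Omega m, c ω * ∏ j, (2 * Complex.I * (ω j : ℂ)) ^ α j :=
          Finset.sum_congr rfl fun ω hω => by rw [shift_sum α ω hω]
  -- coefficient simplification
  have hcoef : ∀ (α : Fin m → ℕ) (ω : Fin m → ℤ),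
      ((∏ j, x j ^ α j : ℝ) : ℂ) / (((∏ j, Nat.factorial (α j) : ℕ) : ℂ) * 2 ^ (∑ j, α j)) *
        ∏ j, (2 * Complex.I * (ω j : ℂ)) ^ α j
      = (∏ j, (Complex.I * (ω j : ℂ) * (x j : ℂ)) ^ α j) / ((∏ j, Nat.factorial (α j) : ℕ) : ℂ) := by
    intro α ω
    have h2 : (2 : ℂ) ^ (∑ j, α j) ≠ 0 := pow_ne_zero _ two_ne_zero
    have hprod : ((∏ j, x j ^ α j : ℝ) : ℂ) * ∏ j, (2 * Complex.I * (ω j : ℂ)) ^ α j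
        = 2 ^ (∑ j, α j) * ∏ j, (Complex.I * (ω j : ℂ) * (x j : ℂ)) ^ α j := by
      push_cast
      rw [← Finset.prod_mul_distrib, ← Finset.prod_pow_eq_pow_sum, ← Finset.prod_mul_distrib]
      exact Finset.prod_congr rfl fun j _ => by ring
    rw [div_mul_eq_mul_div, hprod, mul_comm (((∏ j, Nat.factorial (α j) : ℕ) : ℂ)) _,
      ← div_div, mul_div_cancel_left₀ _ h2]
  -- dot product identity
  have hdot : ∀ ω : Fin m → ℤ, ∑ j, Complex.I * (ω j : ℂ) * (x j : ℂ)
      = Complex.I * ((dotZ ω x : ℝ) : ℂ) := by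
    intro ω
    rw [dotZ]
    push_cast
    rw [Finset.mul_sum]
    exact Finset.sum_congr rfl fun j _ => by ring
  -- the partial sums, complexified
  have key : ∀ N : ℕ, ((∑ k ∈ Finset.range N,
        ∑ α ∈ (Fintype.piFinset fun _ : Fin m => Finset.range (k + 1)).filter
            (fun α => ∑ j, α j = k),
          ((∏ j, x j ^ α j) / (((∏ j, Nat.factorial (α j) : ℕ) : ℝ) * 2 ^ (∑ j, α j))) *
            ∑ ε ∈ ShiftSet α, signProd α ε * g (pshift α ε) : ℝ) : ℂ)
      = ∑ ω ∈ Omega m, c ω *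
          ∑ k ∈ Finset.range N, (Complex.I * ((dotZ ω x : ℝ) : ℂ)) ^ k / k.factorial := by
    intro N
    rw [Complex.ofReal_sum]
    have hk : ∀ k ∈ Finset.range N,
        ((∑ α ∈ (Fintype.piFinset fun _ : Fin m => Finset.range (k + 1)).filter
            (fun α => ∑ j, α j = k),
          ((∏ j, x j ^ α j) / (((∏ j, Nat.factorial (α j) : ℕ) : ℝ) * 2 ^ (∑ j, α j))) *
            ∑ ε ∈ ShiftSet α, signProd α ε * g (pshift α ε) : ℝ) : ℂ)
        = ∑ α ∈ (Fintype.piFinset fun _ : Fin m => Finset.range (k + 1)).filter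
            (fun α => ∑ j, α j = k),
          ∑ ω ∈ Omega m, c ω * ((∏ j, (Complex.I * (ω j : ℂ) * (x j : ℂ)) ^ α j) /
            ((∏ j, Nat.factorial (α j) : ℕ) : ℂ)) := by
      intro k _
      rw [Complex.ofReal_sum]
      refine Finset.sum_congr rfl fun α _ => ?_
      rw [Complex.ofReal_mul, hinner α, Finset.mul_sum]
      refine Finset.sum_congr rfl fun ω _ => ?_
      rw [← hcoef α ω]
      push_cast
      ring
    rw [Finset.sum_congr rfl hk,
      Finset.sum_congr rfl fun (k : ℕ) (_ : k ∈ Finset.range N) => Finset.sum_comm,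
      Finset.sum_comm]
    refine Finset.sum_congr rfl fun ω _ => ?_
    rw [Finset.mul_sum]
    refine Finset.sum_congr rfl fun k _ => ?_
    rw [← Finset.mul_sum, multinom_div m k (fun j => Complex.I * (ω j : ℂ) * (x j : ℂ)), hdot ω]
  -- the complexified limit
  have hlim : Filter.Tendsto (fun N : ℕ => ∑ ω ∈ Omega m, c ω *
        ∑ k ∈ Finset.range N, (Complex.I * ((dotZ ω x : ℝ) : ℂ)) ^ k / k.factorial)
      Filter.atTop (nhds (∑ ω ∈ Omega m, c ω *
        Complex.exp (Complex.I * ((dotZ ω x : ℝ) : ℂ)))) := by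
    refine tendsto_finset_sum _ fun ω _ => ?_
    have hs : HasSum (fun k : ℕ => (Complex.I * ((dotZ ω x : ℝ) : ℂ)) ^ k / k.factorial)
        (Complex.exp (Complex.I * ((dotZ ω x : ℝ) : ℂ))) := by
      rw [Complex.exp_eq_exp_ℂ]
      exact NormedSpace.expSeries_div_hasSum_exp _
    exact hs.tendsto_sum_nat.const_mul _
  have hfinal : Filter.Tendsto (fun N : ℕ => ((∑ k ∈ Finset.range N,
        ∑ α ∈ (Fintype.piFinset fun _ : Fin m => Finset.range (k + 1)).filter
            (fun α => ∑ j, α j = k),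
          ((∏ j, x j ^ α j) / (((∏ j, Nat.factorial (α j) : ℕ) : ℝ) * 2 ^ (∑ j, α j))) *
            ∑ ε ∈ ShiftSet α, signProd α ε * g (pshift α ε) : ℝ) : ℂ))
      Filter.atTop (nhds ((g x : ℝ) : ℂ)) := by
    rw [hgz x]
    exact (Filter.tendsto_congr key).mpr hlim
  have h3 := (Complex.continuous_re.tendsto (((g x : ℝ) : ℂ))).comp hfinal
  simp only [Function.comp_def, Complex.ofReal_re] at h3
  exact h3
end

section
/- Let g ∈ H, let L ∈ ℤ_{≥0}, and let T_L g denote the L-th order Taylor polynomial of g at 0 ∈ ℝ^m, i.e. (T_L g)(x) = Σ_{α ∈ (ℤ_{≥0})^m, |α| ≤ L} (D^α g(0)/α!)·x^α. Then for every x ∈ ℝ^m: |g(x) − (T_L g)(x)| ≤ ( exp(‖x‖₁) − Σ_{k=0}^{L} ‖x‖₁^k / k! ) · ‖g‖_∞. Moreover, if ‖x‖₁ ≤ 1 + L/2, then |g(x) − (T_L g)(x)| ≤ 2·(‖x‖₁^{L+1}/(L+1)!)·‖g‖_∞. -/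
open scoped Real BigOperators
open MeasureTheory Filter

namespace TaylorAux

open Complex Finset

noncomputable section

variable {m : ℕ}

/-- The complex trig sum. -/
def Gsum (m : ℕ) (c : (Fin m → ℤ) → ℂ) (z : Fin m → ℝ) : ℂ :=
  ∑ ω ∈ Omega m, c ω * Complex.exp (Complex.I * (dotZ ω z : ℝ))

def Rep (m : ℕ) (c : (Fin m → ℤ) → ℂ) (g : (Fin m → ℝ) → ℝ) : Prop :=
  ∀ z, g z = (Gsum m c z).re

lemma Rep.congr {c c' : (Fin m → ℤ) → ℂ} {g : (Fin m → ℝ) → ℝ}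
    (h : Rep m c g) (hc : ∀ ω, c ω = c' ω) : Rep m c' g := by
  intro z; rw [h z]; unfold Gsum; congr 1; exact Finset.sum_congr rfl fun ω _ => by rw [hc]

/-- The linear functional `z ↦ dotZ ω z` as a CLM. -/
def Lmap (m : ℕ) (ω : Fin m → ℤ) : (Fin m → ℝ) →L[ℝ] ℝ :=
  ∑ j, ((ω j : ℝ)) • (ContinuousLinearMap.proj j)

lemma Lmap_apply (ω : Fin m → ℤ) (z : Fin m → ℝ) : Lmap m ω z = dotZ ω z := by
  simp [Lmap, dotZ, ContinuousLinearMap.sum_apply]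

lemma Lmap_single (ω : Fin m → ℤ) (j : Fin m) : Lmap m ω (Pi.single j 1) = (ω j : ℝ) := by
  rw [Lmap_apply]
  simp [dotZ, Pi.single_apply, mul_ite, Finset.sum_ite_eq']

lemma hasFDerivAt_gsum (c : (Fin m → ℤ) → ℂ) (z : Fin m → ℝ) :
    HasFDerivAt (fun z => (Gsum m c z).re)
      (Complex.reCLM.comp (∑ ω ∈ Omega m,
        (c ω * Complex.exp (Complex.I * (dotZ ω z : ℝ)) * Complex.I) •
          (Complex.ofRealCLM.comp (Lmap m ω)))) z := by
  apply (Complex.reCLM.hasFDerivAt).comp z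
  apply HasFDerivAt.fun_sum
  intro ω _
  have h1 : HasFDerivAt (fun z : Fin m → ℝ => ((dotZ ω z : ℝ) : ℂ))
      (Complex.ofRealCLM.comp (Lmap m ω)) z := by
    have h0 : HasFDerivAt (fun z : Fin m → ℝ => dotZ ω z) (Lmap m ω) z := by
      have := (Lmap m ω).hasFDerivAt (x := z)
      refine this.congr_fderiv rfl |>.congr_of_eventuallyEq ?_
      filter_upwards with y using (Lmap_apply ω y).symm
    exact (Complex.ofRealCLM.hasFDerivAt (x := dotZ ω z)).comp z h0
  have h2 := ((h1.const_mul Complex.I).cexp).const_mul (c ω)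
  refine h2.congr_fderiv ?_
  ext v
  simp [ContinuousLinearMap.smul_apply]
  ring

end

end TaylorAux
namespace TaylorAux

open Complex Finset

variable {m : ℕ}

lemma Rep.partialD {c : (Fin m → ℤ) → ℂ} {g : (Fin m → ℝ) → ℝ}
    (h : Rep m c g) (j : Fin m) :
    Rep m (fun ω => c ω * (Complex.I * ((ω j : ℤ) : ℂ))) (_root_.partialD j g) := by
  intro z
  have hg : g = fun z => (Gsum m c z).re := funext h
  rw [_root_.partialD, hg, (hasFDerivAt_gsum c z).fderiv]
  simp only [ContinuousLinearMap.coe_comp', Function.comp_apply,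
    ContinuousLinearMap.sum_apply, ContinuousLinearMap.smul_apply,
    ContinuousLinearMap.coe_comp', Lmap_single, Complex.reCLM_apply, Gsum]
  congr 1
  refine Finset.sum_congr rfl fun ω _ => ?_
  simp only [smul_eq_mul, Complex.ofRealCLM_apply]
  push_cast
  ring

lemma Rep.iterD {c : (Fin m → ℤ) → ℂ} {g : (Fin m → ℝ) → ℝ}
    (h : Rep m c g) (j : Fin m) (n : ℕ) :
    Rep m (fun ω => c ω * (Complex.I * ((ω j : ℤ) : ℂ)) ^ n) ((_root_.partialD j)^[n] g) := by
  induction n with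
  | zero => simpa using h.congr (fun ω => by simp)
  | succ n ih =>
      rw [Function.iterate_succ_apply']
      exact (ih.partialD j).congr fun ω => by ring

lemma Rep.foldr {c : (Fin m → ℤ) → ℂ} {g : (Fin m → ℝ) → ℝ}
    (h : Rep m c g) (α : Fin m → ℕ) (l : List (Fin m)) :
    Rep m (fun ω => c ω * (l.map fun j => (Complex.I * ((ω j : ℤ) : ℂ)) ^ α j).prod)
      (l.foldr (fun j h => (_root_.partialD j)^[α j] h) g) := by
  induction l with
  | nil => simpa using h.congr (fun ω => by simp)
  | cons j l ih =>
      simp only [List.foldr_cons, List.map_cons, List.prod_cons]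
      exact ((ih).iterD j (α j)).congr fun ω => by ring

/-- `W α ω = ∏_j (i ω_j)^{α_j}`. -/
def W (α : Fin m → ℕ) (ω : Fin m → ℤ) : ℂ := ∏ j, (Complex.I * ((ω j : ℤ) : ℂ)) ^ α j

lemma Rep.dmulti {c : (Fin m → ℤ) → ℂ} {g : (Fin m → ℝ) → ℝ}
    (h : Rep m c g) (α : Fin m → ℕ) :
    Rep m (fun ω => c ω * W α ω) (Dmulti α g) := by
  have := h.foldr α (List.finRange m)
  rw [Dmulti]
  refine this.congr fun ω => ?_
  congr 1

lemma Rep.dmulti_zero {c : (Fin m → ℤ) → ℂ} {g : (Fin m → ℝ) → ℝ}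
    (h : Rep m c g) (α : Fin m → ℕ) :
    Dmulti α g 0 = (∑ ω ∈ Omega m, c ω * W α ω).re := by
  rw [h.dmulti α 0]
  unfold Gsum
  congr 1
  refine Finset.sum_congr rfl fun ω _ => ?_
  simp [dotZ]

end TaylorAux
namespace TaylorAux

open Complex Finset

variable {m : ℕ}

lemma Rep.bddAbove {c : (Fin m → ℤ) → ℂ} {g : (Fin m → ℝ) → ℝ} (h : Rep m c g) :
    BddAbove (Set.range fun z => |g z|) := by
  refine ⟨∑ ω ∈ Omega m, ‖c ω‖, ?_⟩
  rintro - ⟨z, rfl⟩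
  show |g z| ≤ _
  rw [h z]
  calc |(Gsum m c z).re| ≤ ‖Gsum m c z‖ := Complex.abs_re_le_norm _
    _ ≤ ∑ ω ∈ Omega m, ‖c ω * Complex.exp (Complex.I * (dotZ ω z : ℝ))‖ :=
        norm_sum_le _ _
    _ ≤ ∑ ω ∈ Omega m, ‖c ω‖ := by
        refine Finset.sum_le_sum fun ω _ => ?_
        rw [norm_mul]
        have : ‖Complex.exp (Complex.I * (dotZ ω z : ℝ))‖ = 1 := by
          rw [Complex.norm_exp]
          simp
        rw [this, mul_one]

lemma Rep.abs_le_supNorm {c : (Fin m → ℤ) → ℂ} {g : (Fin m → ℝ) → ℝ} (h : Rep m c g)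
    (z : Fin m → ℝ) : |g z| ≤ supNorm m g :=
  le_ciSup h.bddAbove z

lemma Rep.supNorm_nonneg {c : (Fin m → ℤ) → ℂ} {g : (Fin m → ℝ) → ℝ} (h : Rep m c g) :
    0 ≤ supNorm m g :=
  le_trans (abs_nonneg _) (h.abs_le_supNorm 0)

/-- The shift point associated to `ε`. -/
noncomputable def pp (α : Fin m → ℕ) (ε : ∀ j : Fin m, Fin (α j) → ℤ) : Fin m → ℝ :=
  fun j => (Real.pi / 2) * ∑ k, ((ε j k : ℤ) : ℝ)

lemma cexp_I_mul (t : ℝ) : Complex.exp (Complex.I * (t : ℂ))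
    = ((Real.cos t : ℝ) : ℂ) + ((Real.sin t : ℝ) : ℂ) * Complex.I := by
  rw [mul_comm, Complex.exp_mul_I, Complex.ofReal_cos, Complex.ofReal_sin]

lemma step1 (a : ℕ) (w : ℤ) (hw : w ∈ ({-1, 0, 1} : Finset ℤ)) :
    (Complex.I * (w : ℂ)) ^ a
      = (2 : ℂ)⁻¹ ^ a * ∑ e ∈ Fintype.piFinset (fun _ : Fin a => ({-1, 1} : Finset ℤ)),
          (∏ k, ((e k : ℤ) : ℂ)) *
            Complex.exp (Complex.I * (w : ℂ) * (((Real.pi / 2) * ∑ k, ((e k : ℤ) : ℝ) : ℝ) : ℂ)) := by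
  have harg : ∀ w s : ℤ, Complex.I * (w : ℂ) * (((Real.pi / 2) * ((s : ℤ) : ℝ) : ℝ) : ℂ)
      = Complex.I * ((((w * s : ℤ) : ℝ) * (Real.pi / 2) : ℝ) : ℂ) := by intros; push_cast; ring
  have base : Complex.I * (w : ℂ)
      = (2 : ℂ)⁻¹ * ∑ s ∈ ({-1, 1} : Finset ℤ),
          ((s : ℤ) : ℂ) * Complex.exp (Complex.I * (w : ℂ) * (((Real.pi / 2) * ((s : ℤ) : ℝ) : ℝ) : ℂ)) := by
    rw [Finset.sum_pair (by decide : (-1 : ℤ) ≠ 1)]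
    fin_cases hw
    · rw [harg, harg, cexp_I_mul, cexp_I_mul]
      norm_num
      simp [Real.cos_pi_div_two, Real.sin_pi_div_two]
      ring
    · rw [harg, harg, cexp_I_mul, cexp_I_mul]
      norm_num
    · rw [harg, harg, cexp_I_mul, cexp_I_mul]
      norm_num
      simp [Real.cos_pi_div_two, Real.sin_pi_div_two]
      ring
  calc (Complex.I * (w : ℂ)) ^ a
      = ∏ _k : Fin a, ((2 : ℂ)⁻¹ * ∑ s ∈ ({-1, 1} : Finset ℤ),
          ((s : ℤ) : ℂ) * Complex.exp (Complex.I * (w : ℂ) * (((Real.pi / 2) * ((s : ℤ) : ℝ) : ℝ) : ℂ))) := by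
        rw [← base, Finset.prod_const, Finset.card_univ, Fintype.card_fin]
    _ = (2 : ℂ)⁻¹ ^ a * ∏ k : Fin a, (∑ s ∈ ({-1, 1} : Finset ℤ),
          ((s : ℤ) : ℂ) * Complex.exp (Complex.I * (w : ℂ) * (((Real.pi / 2) * ((s : ℤ) : ℝ) : ℝ) : ℂ))) := by
        rw [Finset.prod_mul_distrib, Finset.prod_const, Finset.card_univ, Fintype.card_fin]
    _ = _ := by
        rw [Finset.prod_univ_sum]
        congr 1
        refine Finset.sum_congr rfl fun e _ => ?_
        rw [Finset.prod_mul_distrib]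
        congr 1
        rw [← Complex.exp_sum]
        congr 1
        push_cast [Finset.mul_sum]
        exact Finset.sum_congr rfl fun k _ => by ring

end TaylorAux
namespace TaylorAux

open Complex Finset

variable {m : ℕ}

lemma W_eq (α : Fin m → ℕ) (ω : Fin m → ℤ) (hω : ω ∈ Omega m) :
    W α ω = (2 : ℂ)⁻¹ ^ (∑ j, α j) *
      ∑ ε ∈ ShiftSet α, ((signProd α ε : ℝ) : ℂ) *
        Complex.exp (Complex.I * ((dotZ ω (pp α ε) : ℝ) : ℂ)) := by
  have hωj : ∀ j, ω j ∈ ({-1, 0, 1} : Finset ℤ) := (Fintype.mem_piFinset).1 hω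
  calc W α ω = ∏ j, ((2 : ℂ)⁻¹ ^ α j *
        ∑ e ∈ Fintype.piFinset (fun _ : Fin (α j) => ({-1, 1} : Finset ℤ)),
          (∏ k, ((e k : ℤ) : ℂ)) *
            Complex.exp (Complex.I * (ω j : ℂ) * (((Real.pi / 2) * ∑ k, ((e k : ℤ) : ℝ) : ℝ) : ℂ))) := by
        exact Finset.prod_congr rfl fun j _ => step1 (α j) (ω j) (hωj j)
    _ = (2 : ℂ)⁻¹ ^ (∑ j, α j) * ∏ j, (∑ e ∈ Fintype.piFinset (fun _ : Fin (α j) => ({-1, 1} : Finset ℤ)),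
          (∏ k, ((e k : ℤ) : ℂ)) *
            Complex.exp (Complex.I * (ω j : ℂ) * (((Real.pi / 2) * ∑ k, ((e k : ℤ) : ℝ) : ℝ) : ℂ))) := by
        rw [Finset.prod_mul_distrib, Finset.prod_pow_eq_pow_sum]
    _ = _ := by
        congr 1
        rw [Finset.prod_univ_sum]
        refine Finset.sum_congr rfl fun ε _ => ?_
        rw [Finset.prod_mul_distrib]
        congr 1
        · push_cast [signProd]
          rfl
        · rw [← Complex.exp_sum]
          congr 1
          push_cast [dotZ, pp, Finset.mul_sum]
          exact Finset.sum_congr rfl fun j _ => Finset.sum_congr rfl fun k _ => by ring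

lemma signProd_mem_abs {α : Fin m → ℕ} {ε : ∀ j : Fin m, Fin (α j) → ℤ}
    (hε : ε ∈ ShiftSet α) : |signProd α ε| = 1 := by
  have h : ∀ j k, ε j k ∈ ({-1, 1} : Finset ℤ) := by
    have := (Fintype.mem_piFinset).1 hε
    exact fun j => (Fintype.mem_piFinset).1 (this j)
  rw [signProd, Finset.abs_prod]
  rw [Finset.prod_eq_one]
  intro j _
  rw [Finset.abs_prod, Finset.prod_eq_one]
  intro k _
  rcases Finset.mem_insert.1 (h j k) with h' | h'
  · rw [h']; norm_num
  · rw [Finset.mem_singleton.1 h']; norm_num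

lemma card_shiftSet (α : Fin m → ℕ) : (ShiftSet α).card = 2 ^ (∑ j, α j) := by
  rw [ShiftSet, Fintype.card_piFinset]
  rw [← Finset.prod_pow_eq_pow_sum]
  refine Finset.prod_congr rfl fun j _ => ?_
  rw [Fintype.card_piFinset]
  simp

lemma Rep.dmulti_zero_bound {c : (Fin m → ℤ) → ℂ} {g : (Fin m → ℝ) → ℝ}
    (h : Rep m c g) (α : Fin m → ℕ) :
    |Dmulti α g 0| ≤ supNorm m g := by
  set N := ∑ j, α j with hN
  have key : Dmulti α g 0 = (2 : ℝ)⁻¹ ^ N * ∑ ε ∈ ShiftSet α, signProd α ε * g (pp α ε) := by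
    rw [h.dmulti_zero α]
    have e1 : ∑ ω ∈ Omega m, c ω * W α ω
        = (((2 : ℝ)⁻¹ ^ N : ℝ) : ℂ) * ∑ ε ∈ ShiftSet α,
            ((signProd α ε : ℝ) : ℂ) * Gsum m c (pp α ε) := by
      have h1 : ∀ ω ∈ Omega m, c ω * W α ω
          = ∑ ε ∈ ShiftSet α, (((2 : ℝ)⁻¹ ^ N : ℝ) : ℂ) *
              (((signProd α ε : ℝ) : ℂ) * (c ω * Complex.exp (Complex.I * ((dotZ ω (pp α ε) : ℝ) : ℂ)))) := by
        intro ω hω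
        rw [W_eq α ω hω, show ((2:ℂ)⁻¹ ^ N) = (((2 : ℝ)⁻¹ ^ N : ℝ) : ℂ) by push_cast; ring]
        rw [Finset.mul_sum, Finset.mul_sum]
        exact Finset.sum_congr rfl fun ε _ => by ring
      rw [Finset.sum_congr rfl h1, Finset.sum_comm, Finset.mul_sum]
      refine Finset.sum_congr rfl fun ε _ => ?_
      rw [Gsum, Finset.mul_sum, Finset.mul_sum]
    rw [e1, Complex.re_ofReal_mul]
    congr 1
    rw [Complex.re_sum]
    refine Finset.sum_congr rfl fun ε _ => ?_
    rw [Complex.re_ofReal_mul, ← h (pp α ε)]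
  rw [key]
  have hbound : |∑ ε ∈ ShiftSet α, signProd α ε * g (pp α ε)| ≤ 2 ^ N * supNorm m g := by
    calc |∑ ε ∈ ShiftSet α, signProd α ε * g (pp α ε)|
        ≤ ∑ ε ∈ ShiftSet α, |signProd α ε * g (pp α ε)| := Finset.abs_sum_le_sum_abs _ _
      _ ≤ ∑ ε ∈ ShiftSet α, supNorm m g := by
          refine Finset.sum_le_sum fun ε hε => ?_
          rw [abs_mul, signProd_mem_abs hε, one_mul]
          exact h.abs_le_supNorm _
      _ = 2 ^ N * supNorm m g := by rw [Finset.sum_const, card_shiftSet, nsmul_eq_mul]; push_cast; ring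
  rw [abs_mul, _root_.abs_of_nonneg (by positivity : (0:ℝ) ≤ (2:ℝ)⁻¹ ^ N)]
  calc (2:ℝ)⁻¹ ^ N * |∑ ε ∈ ShiftSet α, signProd α ε * g (pp α ε)|
      ≤ (2:ℝ)⁻¹ ^ N * (2 ^ N * supNorm m g) := by
        exact mul_le_mul_of_nonneg_left hbound (by positivity)
    _ = supNorm m g := by
        rw [← mul_assoc, ← mul_pow]
        norm_num

end TaylorAux
namespace TaylorAux

open Complex Finset
open scoped Nat

variable {m : ℕ}

lemma multi_sum {R : Type*} [Field R] [CharZero R] (y : Fin m → R) (K : ℕ) :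
    ∑ α ∈ Finset.piAntidiag (Finset.univ : Finset (Fin m)) K,
        (((∏ j, Nat.factorial (α j) : ℕ) : R))⁻¹ * ∏ j, y j ^ α j
      = (∑ j, y j) ^ K / (K ! : R) := by
  rw [Finset.sum_pow_eq_sum_piAntidiag, Finset.sum_div]
  refine Finset.sum_congr rfl fun α hα => ?_
  have hsum : ∑ j, α j = K := ((Finset.mem_piAntidiag).1 hα).1
  have hspec : (∏ j, Nat.factorial (α j)) * Nat.multinomial Finset.univ α = K ! := by
    rw [Nat.multinomial_spec, hsum]
  have h1 : ((∏ j, Nat.factorial (α j) : ℕ) : R) ≠ 0 := Nat.cast_ne_zero.2 (by positivity)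
  have h2 : ((K ! : ℕ) : R) ≠ 0 := Nat.cast_ne_zero.2 (Nat.factorial_ne_zero K)
  have hc : ((K ! : ℕ) : R) = ((∏ j, Nat.factorial (α j) : ℕ) : R) * (Nat.multinomial Finset.univ α : R) := by
    exact_mod_cast congrArg (Nat.cast (R := R)) hspec.symm
  rw [eq_div_iff h2, hc]
  have hQ : (∏ i, ((Nat.factorial (α i) : R))) ≠ 0 :=
    Finset.prod_ne_zero_iff.2 fun i _ => Nat.cast_ne_zero.2 (Nat.factorial_ne_zero _)
  field_simp

lemma multiIdx_eq (L : ℕ) :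
    multiIdx m L = (Finset.range (L + 1)).biUnion
      (fun k => Finset.piAntidiag (Finset.univ : Finset (Fin m)) k) := by
  ext α
  simp only [multiIdx, Finset.mem_filter, Fintype.mem_piFinset, Finset.mem_range,
    Finset.mem_biUnion, Finset.mem_piAntidiag]
  constructor
  · rintro ⟨h1, h2⟩
    exact ⟨∑ j, α j, Nat.lt_succ_of_le h2, rfl, fun i _ => Finset.mem_univ i⟩
  · rintro ⟨k, hk, rfl, -⟩
    refine ⟨fun j => Nat.lt_succ_of_le (le_trans
      (Finset.single_le_sum (fun i _ => Nat.zero_le _) (Finset.mem_univ j)) (Nat.lt_succ_iff.1 hk)),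
      Nat.lt_succ_iff.1 hk⟩

lemma piAntidiag_disj :
    (↑(Finset.range (L + 1)) : Set ℕ).PairwiseDisjoint
      (fun k => Finset.piAntidiag (Finset.univ : Finset (Fin m)) k) := by
  intro a _ b _ hab
  simp only [Function.onFun]
  rw [Finset.disjoint_left]
  intro α hα hα'
  exact hab (((Finset.mem_piAntidiag).1 hα).1.symm.trans ((Finset.mem_piAntidiag).1 hα').1)

lemma tail_le (L : ℕ) {s : ℝ} (hs : 0 ≤ s) (hsmall : s ≤ 1 + (L : ℝ) / 2) :
    ∑' n : ℕ, s ^ (n + (L + 1)) / (((n + (L + 1))! : ℕ) : ℝ)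
      ≤ 2 * (s ^ (L + 1) / (((L + 1)! : ℕ) : ℝ)) := by
  have hgeo : Summable (fun n : ℕ => (s ^ (L + 1) / (((L + 1)! : ℕ) : ℝ)) * (1 / 2) ^ n) :=
    (summable_geometric_of_lt_one (by norm_num) (by norm_num)).mul_left _
  have hle : ∀ n : ℕ, s ^ (n + (L + 1)) / (((n + (L + 1))! : ℕ) : ℝ)
      ≤ (s ^ (L + 1) / (((L + 1)! : ℕ) : ℝ)) * (1 / 2) ^ n := by
    intro n
    have hfac : ((L + 1)! : ℝ) * ((L : ℝ) + 2) ^ n ≤ (((n + (L + 1))! : ℕ) : ℝ) := by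
      have := Nat.factorial_mul_pow_le_factorial (m := L + 1) (n := n)
      have h2 : (L + 1 + n)! = (n + (L + 1))! := by rw [Nat.add_comm]
      rw [h2] at this
      calc ((L + 1)! : ℝ) * ((L : ℝ) + 2) ^ n = (((L + 1)! * (L + 1 + 1) ^ n : ℕ) : ℝ) := by
            push_cast; ring_nf
        _ ≤ _ := by exact_mod_cast Nat.cast_le.2 this
    have hpos1 : (0 : ℝ) < ((L + 1)! : ℝ) * ((L : ℝ) + 2) ^ n := by positivity
    calc s ^ (n + (L + 1)) / (((n + (L + 1))! : ℕ) : ℝ)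
        ≤ s ^ (n + (L + 1)) / (((L + 1)! : ℝ) * ((L : ℝ) + 2) ^ n) :=
          div_le_div_of_nonneg_left (by positivity) hpos1 hfac
      _ = (s ^ (L + 1) / ((L + 1)! : ℝ)) * (s / ((L : ℝ) + 2)) ^ n := by
          rw [pow_add, div_pow, div_mul_div_comm]
          ring
      _ ≤ (s ^ (L + 1) / (((L + 1)! : ℕ) : ℝ)) * (1 / 2) ^ n := by
          refine mul_le_mul_of_nonneg_left ?_ (by positivity)
          refine pow_le_pow_left₀ (by positivity) ?_ n
          rw [div_le_div_iff₀ (by positivity) (by norm_num)]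
          linarith
  calc ∑' n : ℕ, s ^ (n + (L + 1)) / (((n + (L + 1))! : ℕ) : ℝ)
      ≤ ∑' n : ℕ, (s ^ (L + 1) / (((L + 1)! : ℕ) : ℝ)) * (1 / 2) ^ n := by
        refine Summable.tsum_le_tsum hle ?_ hgeo
        exact (summable_nat_add_iff (f := fun n : ℕ => s ^ n / ((n ! : ℕ) : ℝ)) (L + 1)).2
          (Real.summable_pow_div_factorial s)
    _ = (s ^ (L + 1) / (((L + 1)! : ℕ) : ℝ)) * (1 - 1 / 2)⁻¹ := by
        rw [tsum_mul_left, tsum_geometric_of_lt_one (by norm_num) (by norm_num)]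
    _ = 2 * (s ^ (L + 1) / (((L + 1)! : ℕ) : ℝ)) := by norm_num; ring

end TaylorAux
namespace TaylorAux

open Complex Finset
open scoped Nat

variable {m : ℕ}

noncomputable def aseq (m : ℕ) (c : (Fin m → ℤ) → ℂ) (x : Fin m → ℝ) (n : ℕ) : ℂ :=
  ∑ ω ∈ Omega m, c ω * ((Complex.I * ((dotZ ω x : ℝ) : ℂ)) ^ n / (n ! : ℂ))

lemma Rep.sum_piAntidiag_eq {c : (Fin m → ℤ) → ℂ} {g : (Fin m → ℝ) → ℝ} (h : Rep m c g)
    (x : Fin m → ℝ) (K : ℕ) :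
    ∑ α ∈ Finset.piAntidiag (Finset.univ : Finset (Fin m)) K,
        (Dmulti α g 0 / ((∏ j, Nat.factorial (α j) : ℕ) : ℝ)) * ∏ j, x j ^ α j
      = (aseq m c x K).re := by
  have e1 : ∀ α : Fin m → ℕ,
      (Dmulti α g 0 / ((∏ j, Nat.factorial (α j) : ℕ) : ℝ)) * ∏ j, x j ^ α j
        = (((((∏ j, Nat.factorial (α j) : ℕ) : ℝ))⁻¹ * ∏ j, x j ^ α j : ℝ) * (∑ ω ∈ Omega m, c ω * W α ω)
            : ℂ).re := by
    intro α
    rw [Complex.re_ofReal_mul, h.dmulti_zero α]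
    ring
  rw [Finset.sum_congr rfl fun α _ => e1 α, ← Complex.re_sum]
  congr 1
  rw [Finset.sum_congr rfl fun α (_ : α ∈ Finset.piAntidiag (Finset.univ : Finset (Fin m)) K) =>
    Finset.mul_sum (Omega m) (fun ω => c ω * W α ω)
      ((((∏ j, Nat.factorial (α j) : ℕ) : ℝ))⁻¹ * ∏ j, x j ^ α j : ℝ)]
  rw [Finset.sum_comm, aseq]
  refine Finset.sum_congr rfl fun ω _ => ?_
  have e2 : ∀ α ∈ Finset.piAntidiag (Finset.univ : Finset (Fin m)) K,
      ((((∏ j, Nat.factorial (α j) : ℕ) : ℝ))⁻¹ * ∏ j, x j ^ α j : ℝ) * (c ω * W α ω)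
        = c ω * ((((∏ j, Nat.factorial (α j) : ℕ) : ℂ))⁻¹ *
            ∏ j, (Complex.I * ((ω j : ℤ) : ℂ) * ((x j : ℝ) : ℂ)) ^ α j) := by
    intro α _
    have : (∏ j, (Complex.I * ((ω j : ℤ) : ℂ) * ((x j : ℝ) : ℂ)) ^ α j)
        = W α ω * ∏ j, ((x j : ℝ) : ℂ) ^ α j := by
      rw [W, ← Finset.prod_mul_distrib]
      exact Finset.prod_congr rfl fun j _ => by rw [mul_pow]
    rw [this]
    push_cast
    ring
  rw [Finset.sum_congr rfl e2, ← Finset.mul_sum]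
  congr 1
  rw [multi_sum]
  congr 2
  push_cast [dotZ, Finset.mul_sum]
  exact Finset.sum_congr rfl fun j _ => by ring

lemma Rep.abs_aseq_le {c : (Fin m → ℤ) → ℂ} {g : (Fin m → ℝ) → ℝ} (h : Rep m c g)
    (x : Fin m → ℝ) (K : ℕ) :
    |(aseq m c x K).re| ≤ supNorm m g * ((∑ j, |x j|) ^ K / (K ! : ℝ)) := by
  rw [← h.sum_piAntidiag_eq x K]
  calc |∑ α ∈ Finset.piAntidiag (Finset.univ : Finset (Fin m)) K,
        (Dmulti α g 0 / ((∏ j, Nat.factorial (α j) : ℕ) : ℝ)) * ∏ j, x j ^ α j|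
      ≤ ∑ α ∈ Finset.piAntidiag (Finset.univ : Finset (Fin m)) K,
          |(Dmulti α g 0 / ((∏ j, Nat.factorial (α j) : ℕ) : ℝ)) * ∏ j, x j ^ α j| :=
        Finset.abs_sum_le_sum_abs _ _
    _ ≤ ∑ α ∈ Finset.piAntidiag (Finset.univ : Finset (Fin m)) K,
          supNorm m g * ((((∏ j, Nat.factorial (α j) : ℕ) : ℝ))⁻¹ * ∏ j, |x j| ^ α j) := by
        refine Finset.sum_le_sum fun α _ => ?_
        rw [abs_mul, abs_div, Nat.abs_cast, Finset.abs_prod]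
        have hprod : ∏ j, |x j ^ α j| = ∏ j, |x j| ^ α j :=
          Finset.prod_congr rfl fun j _ => abs_pow _ _
        rw [hprod, div_eq_mul_inv, mul_assoc]
        refine mul_le_mul_of_nonneg_right (h.dmulti_zero_bound α) ?_
        positivity
    _ = supNorm m g * ((∑ j, |x j|) ^ K / (K ! : ℝ)) := by
        rw [← Finset.mul_sum, multi_sum (fun j => |x j|) K]

end TaylorAux

/-- Taylor remainder bounds: for `g ∈ H`, `L ∈ ℤ_{≥0}` and `x ∈ ℝ^m`,
`|g(x) - (T_L g)(x)| ≤ (exp ‖x‖₁ - Σ_{k≤L} ‖x‖₁^k/k!) ‖g‖_∞`, and if `‖x‖₁ ≤ 1 + L/2`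
then `|g(x) - (T_L g)(x)| ≤ 2 (‖x‖₁^{L+1}/(L+1)!) ‖g‖_∞`. -/
theorem taylor_remainder_bound (m : ℕ) (hm : 0 < m)
    (g : (Fin m → ℝ) → ℝ) (hg : g ∈ Hset m) (L : ℕ) (x : Fin m → ℝ) :
    |g x - ∑ α ∈ multiIdx m L,
        (Dmulti α g 0 / ((∏ j, Nat.factorial (α j) : ℕ) : ℝ)) * ∏ j, x j ^ α j|
      ≤ (Real.exp (∑ j, |x j|) -
          ∑ k ∈ Finset.range (L + 1), (∑ j, |x j|) ^ k / (Nat.factorial k : ℝ)) * supNorm m g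
    ∧ ((∑ j, |x j|) ≤ 1 + (L : ℝ) / 2 →
        |g x - ∑ α ∈ multiIdx m L,
            (Dmulti α g 0 / ((∏ j, Nat.factorial (α j) : ℕ) : ℝ)) * ∏ j, x j ^ α j|
          ≤ 2 * ((∑ j, |x j|) ^ (L + 1) / (Nat.factorial (L + 1) : ℝ)) * supNorm m g) := by
  classical
  obtain ⟨c, hsym, hc⟩ := hg
  have h : TaylorAux.Rep m c g := by
    intro z
    show g z = (∑ ω ∈ Omega m, c ω * Complex.exp (Complex.I * (dotZ ω z : ℝ))).re
    rw [← hc z, Complex.ofReal_re]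
  set s : ℝ := ∑ j, |x j| with hs_def
  have hs0 : 0 ≤ s := Finset.sum_nonneg fun j _ => abs_nonneg _
  -- summability of the complex series
  have hsum_each : ∀ ω ∈ Omega m,
      Summable (fun n : ℕ => c ω * ((Complex.I * ((dotZ ω x : ℝ) : ℂ)) ^ n / (n.factorial : ℂ))) :=
    fun ω _ => (NormedSpace.expSeries_div_summable
      (Complex.I * ((dotZ ω x : ℝ) : ℂ))).mul_left (c ω)
  have hFsum : Summable (TaylorAux.aseq m c x) := summable_sum hsum_each
  have hFshift : Summable (fun i : ℕ => TaylorAux.aseq m c x (i + (L + 1))) :=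
    (summable_nat_add_iff (f := TaylorAux.aseq m c x) (L + 1)).2 hFsum
  -- total sum of the complex series is Gsum
  have h1 : ∑' n, TaylorAux.aseq m c x n = TaylorAux.Gsum m c x := by
    unfold TaylorAux.aseq
    rw [Summable.tsum_finsetSum hsum_each]
    refine Finset.sum_congr rfl fun ω _ => ?_
    rw [tsum_mul_left]
    congr 1
    rw [Complex.exp_eq_exp_ℂ, NormedSpace.exp_eq_tsum_div]
  have h2 := Summable.sum_add_tsum_nat_add (f := TaylorAux.aseq m c x) (L + 1) hFsum
  -- Taylor polynomial equals partial sums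
  have hT : ∑ α ∈ multiIdx m L,
      (Dmulti α g 0 / ((∏ j, Nat.factorial (α j) : ℕ) : ℝ)) * ∏ j, x j ^ α j
      = ∑ k ∈ Finset.range (L + 1), (TaylorAux.aseq m c x k).re := by
    rw [TaylorAux.multiIdx_eq, Finset.sum_biUnion TaylorAux.piAntidiag_disj]
    exact Finset.sum_congr rfl fun k _ => h.sum_piAntidiag_eq x k
  have key : g x - ∑ α ∈ multiIdx m L,
      (Dmulti α g 0 / ((∏ j, Nat.factorial (α j) : ℕ) : ℝ)) * ∏ j, x j ^ α j
      = ∑' i, (TaylorAux.aseq m c x (i + (L + 1))).re := by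
    have h3 := congrArg Complex.re h2
    rw [Complex.add_re, Complex.re_sum, h1, Complex.re_tsum hFshift] at h3
    have h4 : (TaylorAux.Gsum m c x).re = g x := (h x).symm
    rw [h4] at h3
    rw [hT]
    linarith
  -- summable real bound series
  have hRsum : Summable (fun n : ℕ => s ^ n / ((n.factorial : ℕ) : ℝ)) :=
    Real.summable_pow_div_factorial s
  have hRshift : Summable (fun i : ℕ => s ^ (i + (L + 1)) / (((i + (L + 1)).factorial : ℕ) : ℝ)) :=
    (summable_nat_add_iff (f := fun n : ℕ => s ^ n / ((n.factorial : ℕ) : ℝ)) (L + 1)).2 hRsum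
  have hBsum : Summable (fun i : ℕ =>
      supNorm m g * (s ^ (i + (L + 1)) / (((i + (L + 1)).factorial : ℕ) : ℝ))) :=
    hRshift.mul_left _
  have habs : |g x - ∑ α ∈ multiIdx m L,
      (Dmulti α g 0 / ((∏ j, Nat.factorial (α j) : ℕ) : ℝ)) * ∏ j, x j ^ α j|
      ≤ ∑' i, supNorm m g * (s ^ (i + (L + 1)) / (((i + (L + 1)).factorial : ℕ) : ℝ)) := by
    rw [key, ← Real.norm_eq_abs]
    refine tsum_of_norm_bounded hBsum.hasSum fun i => ?_
    rw [Real.norm_eq_abs]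
    exact h.abs_aseq_le x (i + (L + 1))
  have htail : ∑' i : ℕ, s ^ (i + (L + 1)) / (((i + (L + 1)).factorial : ℕ) : ℝ)
      = Real.exp s - ∑ k ∈ Finset.range (L + 1), s ^ k / (k.factorial : ℝ) := by
    have h3 := Summable.sum_add_tsum_nat_add (f := fun n : ℕ => s ^ n / ((n.factorial : ℕ) : ℝ)) (L + 1) hRsum
    have h4 : Real.exp s = ∑' n : ℕ, s ^ n / ((n.factorial : ℕ) : ℝ) := by
      rw [Real.exp_eq_exp_ℝ, NormedSpace.exp_eq_tsum_div]
    rw [← h4] at h3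
    linarith
  have hmain : |g x - ∑ α ∈ multiIdx m L,
      (Dmulti α g 0 / ((∏ j, Nat.factorial (α j) : ℕ) : ℝ)) * ∏ j, x j ^ α j|
      ≤ supNorm m g * (Real.exp s - ∑ k ∈ Finset.range (L + 1), s ^ k / (k.factorial : ℝ)) := by
    calc _ ≤ _ := habs
      _ = supNorm m g * ∑' i : ℕ, s ^ (i + (L + 1)) / (((i + (L + 1)).factorial : ℕ) : ℝ) :=
          tsum_mul_left
      _ = _ := by rw [htail]
  constructor
  · rw [mul_comm] at hmain
    exact hmain
  · intro hsmall
    have hb2 : ∑' i : ℕ, s ^ (i + (L + 1)) / (((i + (L + 1)).factorial : ℕ) : ℝ)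
        ≤ 2 * (s ^ (L + 1) / (((L + 1).factorial : ℕ) : ℝ)) := TaylorAux.tail_le L hs0 hsmall
    calc |g x - ∑ α ∈ multiIdx m L,
        (Dmulti α g 0 / ((∏ j, Nat.factorial (α j) : ℕ) : ℝ)) * ∏ j, x j ^ α j|
        ≤ supNorm m g * ∑' i : ℕ, s ^ (i + (L + 1)) / (((i + (L + 1)).factorial : ℕ) : ℝ) := by
          rw [← tsum_mul_left]; exact habs
      _ ≤ supNorm m g * (2 * (s ^ (L + 1) / (((L + 1).factorial : ℕ) : ℝ))) :=
          mul_le_mul_of_nonneg_left hb2 h.supNorm_nonneg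
      _ = 2 * (s ^ (L + 1) / ((Nat.factorial (L + 1) : ℕ) : ℝ)) * supNorm m g := by ring
end

section
/- Let D ∈ ℤ_{≥1}, let p₁, …, p_D ∈ ℝ^m, and let g ∈ H. Then the linear system of equations (K(p_i, p_j))_{1≤i,j≤D} · η = (g(p₁), …, g(p_D))ᵀ, with unknown η ∈ ℝ^D, has at least one solution. -/
open scoped Real BigOperators
open MeasureTheory Filter

open Matrix in
lemma range_mul_transpose {n k : Type*} [Fintype n] [Fintype k] [DecidableEq n]
    (A : Matrix n k ℝ) :
    LinearMap.range (A * Aᵀ).mulVecLin = LinearMap.range A.mulVecLin := by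
  apply Submodule.eq_of_le_of_finrank_le
  · rw [Matrix.mulVecLin_mul]
    exact LinearMap.range_comp_le_range _ _
  · exact le_of_eq (Matrix.rank_self_mul_transpose A).symm

lemma dotZ_sub {m : ℕ} (ω : Fin m → ℤ) (x z : Fin m → ℝ) :
    dotZ ω (x - z) = dotZ ω x - dotZ ω z := by
  simp [dotZ, mul_sub, Finset.sum_sub_distrib]

open Matrix
/-- the linear system `(K(p_i,p_j))·η = (g(p₁),…,g(p_D))ᵀ`
has at least one solution. -/
theorem interpolation_system_solvable (m : ℕ) (hm : 0 < m) (D : ℕ) (hD : 1 ≤ D)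
    (p : Fin D → (Fin m → ℝ)) (g : (Fin m → ℝ) → ℝ) (hg : g ∈ Hset m) :
    ∃ η : Fin D → ℝ,
      (Matrix.of fun i j => Kker m (p i) (p j)).mulVec η = fun i => g (p i) := by
  obtain ⟨c, _hconj, hgz⟩ := hg
  set cst : ℝ := ((2 * Real.pi) ^ m)⁻¹ with hcst
  have hcst0 : cst ≠ 0 :=
    inv_ne_zero (pow_ne_zero _ (by positivity))
  -- feature matrix
  set A : Matrix (Fin D) ((Omega m) × Bool) ℝ :=
    Matrix.of (fun i x =>
      if x.2 then Real.cos (dotZ x.1 (p i)) else Real.sin (dotZ x.1 (p i))) with hA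
  -- kernel matrix is cst • (A * Aᵀ)
  have hK : ∀ i j, Kker m (p i) (p j) = cst * (A * Aᵀ) i j := by
    intro i j
    have : (∑ ω ∈ Omega m, Complex.exp (Complex.I * (dotZ ω (p i - p j) : ℝ))).re
        = ∑ ω ∈ Omega m, Real.cos (dotZ ω (p i - p j)) := by
      rw [Complex.re_sum]
      refine Finset.sum_congr rfl fun ω _ => ?_
      rw [mul_comm, Complex.exp_ofReal_mul_I_re]
    rw [Kker, this, Matrix.mul_apply]
    rw [Fintype.sum_prod_type]
    congr 1
    rw [← Finset.sum_coe_sort (Omega m) (fun ω => Real.cos (dotZ ω (p i - p j)))]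
    refine Finset.sum_congr rfl fun ω _ => ?_
    rw [Fintype.sum_bool]
    simp only [hA, Matrix.of_apply, Matrix.transpose_apply, if_true, if_false,
      Bool.false_eq_true]
    rw [dotZ_sub, Real.cos_sub]
  -- the right-hand side is A.mulVec w
  set w : (Omega m) × Bool → ℝ :=
    fun x => if x.2 then (c x.1).re else -(c x.1).im with hw
  have hb : ∀ i, g (p i) = A.mulVec w i := by
    intro i
    have h1 : g (p i) = ((g (p i) : ℂ)).re := rfl
    rw [h1, hgz (p i), Complex.re_sum]
    rw [Matrix.mulVec, dotProduct, Fintype.sum_prod_type]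
    rw [← Finset.sum_coe_sort (Omega m)
      (fun ω => (c ω * Complex.exp (Complex.I * (dotZ ω (p i) : ℝ))).re)]
    refine Finset.sum_congr rfl fun ω _ => ?_
    rw [Fintype.sum_bool]
    simp only [hA, hw, Matrix.of_apply, if_true, if_false, Bool.false_eq_true]
    rw [mul_comm Complex.I, Complex.exp_mul_I]
    simp [Complex.mul_re, Complex.cos_ofReal_re, Complex.sin_ofReal_re]
    ring
  -- solve using range equality
  have hmem : (fun i => g (p i)) ∈ LinearMap.range (A * Aᵀ).mulVecLin := by
    rw [range_mul_transpose]
    exact ⟨w, funext fun i => (hb i).symm⟩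
  obtain ⟨η₀, hη₀⟩ := hmem
  refine ⟨cst⁻¹ • η₀, ?_⟩
  have hM : (Matrix.of fun i j => Kker m (p i) (p j)) = cst • (A * Aᵀ) := by
    ext i j
    simp [hK i j]
  rw [hM, Matrix.smul_mulVec, Matrix.mulVec_smul, smul_smul,
    mul_inv_cancel₀ hcst0, one_smul, ← Matrix.mulVecLin_apply, hη₀]
end

section
/- Let d ∈ {0, 1, …, m} and let I_d = {z ∈ ℝ^m : at most d coordinates of z are nonzero}. Then for every p ∈ ((π/2)·{0,1,2,3}^m) ∩ I_d, the function K_p lies in span_ℝ{ K_q : q ∈ ((π/2)·{−1,0,1}^m) ∩ I_d }. -/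
open scoped Real BigOperators
open MeasureTheory Filter

-- helpers
lemma expI (x : ℝ) : Complex.exp (Complex.I * (x:ℂ)) = (Real.cos x : ℂ) + (Real.sin x : ℂ) * Complex.I := by
  rw [mul_comm, Complex.exp_mul_I, ← Complex.ofReal_cos, ← Complex.ofReal_sin]

lemma key1 (n : ℤ) (hn : n = -1 ∨ n = 0 ∨ n = 1) :
    Complex.exp (Complex.I * (((n:ℝ)*Real.pi : ℝ) : ℂ)) =
    Complex.exp (Complex.I * (((n:ℝ)*(Real.pi/2) : ℝ) : ℂ)) +
    Complex.exp (Complex.I * (((n:ℝ)*(-(Real.pi/2)) : ℝ) : ℂ)) - 1 := by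
  rcases hn with rfl | rfl | rfl <;>
  · rw [expI, expI, expI]
    push_cast
    norm_num [Real.cos_pi, Real.sin_pi, Real.cos_pi_div_two, Real.sin_pi_div_two]

lemma key2 (n : ℤ) :
    Complex.exp (Complex.I * (((n:ℝ)*(Real.pi/2*3) : ℝ) : ℂ)) =
    Complex.exp (Complex.I * (((n:ℝ)*(-(Real.pi/2)) : ℝ) : ℂ)) := by
  have h : (n:ℝ)*(Real.pi/2*3) = (n:ℝ)*(-(Real.pi/2)) + 2*Real.pi*(n:ℝ) := by ring
  rw [h]
  push_cast
  rw [mul_add, Complex.exp_add]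
  have h2 : Complex.I * (2*(Real.pi:ℂ)*(n:ℂ)) = (n:ℂ) * (2*(Real.pi:ℂ)*Complex.I) := by ring
  rw [h2, Complex.exp_int_mul_two_pi_mul_I, mul_one]

lemma omega_coord {m : ℕ} {ω : Fin m → ℤ} (hω : ω ∈ Omega m) (j : Fin m) :
    ω j = -1 ∨ ω j = 0 ∨ ω j = 1 := by
  have := Fintype.mem_piFinset.mp hω j
  simpa using this

lemma dot_update {m : ℕ} (ω : Fin m → ℤ) (p z : Fin m → ℝ) (j : Fin m) (t : ℝ) :
    dotZ ω (Function.update p j t - z) = dotZ ω (Function.update p j 0 - z) + (ω j : ℝ) * t := by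
  have key : ∀ s : ℝ, dotZ ω (Function.update p j s - z)
      = (ω j:ℝ)*(s - z j) + ∑ k ∈ Finset.univ.erase j, (ω k:ℝ)*(p k - z k) := by
    intro s
    unfold dotZ
    rw [← Finset.add_sum_erase _ _ (Finset.mem_univ j)]
    congr 1
    · simp
    · refine Finset.sum_congr rfl fun k hk => ?_
      rw [Pi.sub_apply, Function.update_of_ne (Finset.ne_of_mem_erase hk)]
  rw [key, key]; ring

lemma Kker_update {m : ℕ} (p z : Fin m → ℝ) (j : Fin m) (t : ℝ) :
    Kker m (Function.update p j t) z = ((2 * Real.pi) ^ m)⁻¹ *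
      (∑ ω ∈ Omega m, Complex.exp (Complex.I * (dotZ ω (Function.update p j 0 - z) : ℝ))
        * Complex.exp (Complex.I * (((ω j : ℝ) * t : ℝ) : ℂ))).re := by
  unfold Kker
  congr 2
  refine Finset.sum_congr rfl fun ω _ => ?_
  rw [dot_update, Complex.ofReal_add, mul_add, Complex.exp_add]

lemma Kker_pi_combo {m : ℕ} (p z : Fin m → ℝ) (j : Fin m) :
    Kker m (Function.update p j Real.pi) z
      = Kker m (Function.update p j (Real.pi/2)) z
        + Kker m (Function.update p j (-(Real.pi/2))) z
        - Kker m (Function.update p j 0) z := by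
  rw [Kker_update p z j Real.pi, Kker_update p z j (Real.pi/2),
    Kker_update p z j (-(Real.pi/2)), Kker_update p z j 0,
    ← mul_add, ← mul_sub, ← Complex.add_re, ← Complex.sub_re,
    ← Finset.sum_add_distrib, ← Finset.sum_sub_distrib]
  congr 2
  refine Finset.sum_congr rfl fun ω hω => ?_
  rw [← mul_add, ← mul_sub]
  congr 1
  have h0 : Complex.exp (Complex.I * (((ω j : ℝ) * (0:ℝ) : ℝ) : ℂ)) = 1 := by
    norm_num
  rw [h0, key1 (ω j) (omega_coord hω j)]

lemma Kker_period {m : ℕ} (p z : Fin m → ℝ) (j : Fin m) :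
    Kker m (Function.update p j (Real.pi/2*3)) z
      = Kker m (Function.update p j (-(Real.pi/2))) z := by
  rw [Kker_update p z j (Real.pi/2*3), Kker_update p z j (-(Real.pi/2))]
  congr 2
  refine Finset.sum_congr rfl fun ω hω => ?_
  rw [key2 (ω j)]

lemma Iset_update {m d : ℕ} {p : Fin m → ℝ} (hI : p ∈ Iset m d) (j : Fin m) (t : ℝ)
    (hpj : p j ≠ 0) : Function.update p j t ∈ Iset m d := by
  refine le_trans (Set.ncard_le_ncard ?_ (Set.toFinite _)) hI
  intro k hk
  simp only [Set.mem_setOf_eq] at *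
  rcases eq_or_ne k j with rfl | h
  · exact hpj
  · rwa [Function.update_of_ne h] at hk

lemma base_case {m d : ℕ} {p : Fin m → ℝ}
    (hgrid : ∀ j, p j = -(Real.pi/2) ∨ p j = 0 ∨ p j = Real.pi/2) (hI : p ∈ Iset m d) :
    Kfun m p ∈ Submodule.span ℝ (Kfun m '' (grid3 m ∩ Iset m d)) := by
  have hp3 : p ∈ grid3 m := by
    refine ⟨fun j => if p j = -(Real.pi/2) then 0 else if p j = 0 then 1 else 2, ?_⟩
    funext j
    unfold pt3
    beta_reduce
    by_cases h1 : p j = -(Real.pi/2)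
    · rw [if_pos h1, h1]; norm_num
    · rw [if_neg h1]
      by_cases h2 : p j = 0
      · rw [if_pos h2, h2]; norm_num
      · have h3 : p j = Real.pi/2 := by rcases hgrid j with h|h|h <;> tauto
        rw [if_neg h2, h3]; norm_num
  exact Submodule.subset_span ⟨p, ⟨hp3, hI⟩, rfl⟩

lemma main_aux (m d : ℕ) (n : ℕ) : ∀ p : Fin m → ℝ,
    (∀ j, p j = -(Real.pi/2) ∨ p j = 0 ∨ p j = Real.pi/2 ∨ p j = Real.pi ∨ p j = Real.pi/2*3) →
    p ∈ Iset m d →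
    (Finset.univ.filter fun j => p j = Real.pi ∨ p j = Real.pi/2*3).card ≤ n →
    Kfun m p ∈ Submodule.span ℝ (Kfun m '' (grid3 m ∩ Iset m d)) := by
  have hπ := Real.pi_pos
  induction n with
  | zero =>
    intro p hg hI hc
    refine base_case (fun j => ?_) hI
    have hB : (Finset.univ.filter fun j => p j = Real.pi ∨ p j = Real.pi/2*3) = ∅ :=
      Finset.card_eq_zero.mp (Nat.le_zero.mp hc)
    have hj : ¬(p j = Real.pi ∨ p j = Real.pi/2*3) := by
      intro h
      have : j ∈ (Finset.univ.filter fun j => p j = Real.pi ∨ p j = Real.pi/2*3) :=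
        Finset.mem_filter.mpr ⟨Finset.mem_univ j, h⟩
      simp [hB] at this
    rcases hg j with h|h|h|h|h <;> tauto
  | succ n ih =>
    intro p hg hI hc
    by_cases hb : ∃ j, p j = Real.pi ∨ p j = Real.pi/2*3
    · obtain ⟨j, hj⟩ := hb
      have hBj : j ∈ (Finset.univ.filter fun j => p j = Real.pi ∨ p j = Real.pi/2*3) :=
        Finset.mem_filter.mpr ⟨Finset.mem_univ j, hj⟩
      have hpj0 : p j ≠ 0 := by
        rcases hj with h|h <;> rw [h] <;> positivity
      have hcard : ∀ t : ℝ, t ≠ Real.pi → t ≠ Real.pi/2*3 →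
          (Finset.univ.filter fun k => Function.update p j t k = Real.pi ∨
            Function.update p j t k = Real.pi/2*3).card ≤ n := by
        intro t ht1 ht2
        have hsub : (Finset.univ.filter fun k => Function.update p j t k = Real.pi ∨
            Function.update p j t k = Real.pi/2*3)
            ⊆ (Finset.univ.filter fun k => p k = Real.pi ∨ p k = Real.pi/2*3).erase j := by
          intro k hk
          rw [Finset.mem_filter] at hk
          rcases eq_or_ne k j with rfl | h
          · rw [Function.update_self] at hk; tauto
          · rw [Function.update_of_ne h] at hk
            exact Finset.mem_erase.mpr ⟨h, Finset.mem_filter.mpr ⟨Finset.mem_univ k, hk.2⟩⟩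
        have := Finset.card_le_card hsub
        rw [Finset.card_erase_of_mem hBj] at this
        omega
      have hgrid : ∀ t : ℝ,
          (t = -(Real.pi/2) ∨ t = 0 ∨ t = Real.pi/2 ∨ t = Real.pi ∨ t = Real.pi/2*3) →
          ∀ k, Function.update p j t k = -(Real.pi/2) ∨ Function.update p j t k = 0 ∨
            Function.update p j t k = Real.pi/2 ∨ Function.update p j t k = Real.pi ∨
            Function.update p j t k = Real.pi/2*3 := by
        intro t ht k
        rcases eq_or_ne k j with rfl | h
        · rw [Function.update_self]; exact ht
        · rw [Function.update_of_ne h]; exact hg k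
      rcases hj with hj | hj
      · -- p j = π
        have hrew : Kfun m p = Kfun m (Function.update p j (Real.pi/2))
            + Kfun m (Function.update p j (-(Real.pi/2)))
            - Kfun m (Function.update p j 0) := by
          funext z
          have hps : p = Function.update p j Real.pi := by rw [← hj, Function.update_eq_self]
          conv_lhs => rw [hps]
          simpa [Kfun] using Kker_pi_combo p z j
        rw [hrew]
        have m1 := ih (Function.update p j (Real.pi/2)) (hgrid _ (by tauto))
          (Iset_update hI j _ hpj0) (hcard _ (by intro h; linarith) (by intro h; linarith))
        have m2 := ih (Function.update p j (-(Real.pi/2))) (hgrid _ (by tauto))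
          (Iset_update hI j _ hpj0) (hcard _ (by intro h; linarith) (by intro h; linarith))
        have m3 := ih (Function.update p j 0) (hgrid _ (by tauto))
          (Iset_update hI j _ hpj0) (hcard _ (by intro h; linarith) (by intro h; linarith))
        exact Submodule.sub_mem _ (Submodule.add_mem _ m1 m2) m3
      · -- p j = 3π/2
        have hrew : Kfun m p = Kfun m (Function.update p j (-(Real.pi/2))) := by
          funext z
          have hps : p = Function.update p j (Real.pi/2*3) := by
            rw [← hj, Function.update_eq_self]
          conv_lhs => rw [hps]
          exact Kker_period p z j
        rw [hrew]
        exact ih (Function.update p j (-(Real.pi/2))) (hgrid _ (by tauto))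
          (Iset_update hI j _ hpj0) (hcard _ (by intro h; linarith) (by intro h; linarith))
    · push_neg at hb
      refine ih p hg hI ?_
      have : (Finset.univ.filter fun j => p j = Real.pi ∨ p j = Real.pi/2*3) = ∅ := by
        refine Finset.filter_eq_empty_iff.mpr fun j _ => ?_
        push_neg
        exact hb j
      simp [this]

/-- for `p ∈ ((π/2)·{0,1,2,3}^m) ∩ I_d`, the function `K_p` lies in
`span_ℝ{K_q : q ∈ ((π/2)·{-1,0,1}^m) ∩ I_d}`. -/
theorem Kp_in_span_of_grid3 (m : ℕ) (hm : 0 < m) (d : ℕ) (hd : d ≤ m)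
    (p : Fin m → ℝ) (hp : p ∈ grid4 m ∩ Iset m d) :
    Kfun m p ∈ Submodule.span ℝ (Kfun m '' (grid3 m ∩ Iset m d)) := by
  obtain ⟨⟨s, rfl⟩, hI⟩ := hp
  refine main_aux m d m (pt4 m s) (fun j => ?_) hI ?_
  · unfold pt4
    have h4 : (s j : ℕ) = 0 ∨ (s j : ℕ) = 1 ∨ (s j : ℕ) = 2 ∨ (s j : ℕ) = 3 := by
      omega
    rcases h4 with h|h|h|h <;> rw [h] <;> push_cast
    · right; left; ring
    · right; right; left; ring
    · right; right; right; left; ring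
    · right; right; right; right; ring
  · calc (Finset.univ.filter fun j => pt4 m s j = Real.pi ∨ pt4 m s j = Real.pi/2*3).card
        ≤ Finset.univ.card := Finset.card_le_card (Finset.filter_subset _ _)
      _ = m := by simp
end

section
/- Let d ∈ {0, 1, …, m} and let I_d = {z ∈ ℝ^m : at most d coordinates of z are nonzero}. Then the family (K_q)_{q ∈ ((π/2)·{−1,0,1}^m) ∩ I_d} is a basis of the subspace span_ℝ{ K_p : p ∈ I_d } of H. -/
open scoped Real BigOperators
open MeasureTheory Filter

/- ========= auxiliary development ========= -/

noncomputable section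

def Ffun (t : ℝ) : ℝ := 1 + 2 * Real.cos t

lemma sum_exp_three (y : ℝ) : ∑ a ∈ ({-1, 0, 1} : Finset ℤ), Complex.exp (Complex.I * ((a : ℝ) * y : ℝ)) =
    ((Ffun y : ℝ) : ℂ) := by
  rw [show ({-1,0,1} : Finset ℤ) = insert (-1) (insert 0 {1}) from rfl]
  rw [Finset.sum_insert (by decide), Finset.sum_insert (by decide), Finset.sum_singleton]
  push_cast
  rw [show Complex.I * (-1 * y) = -y * Complex.I by ring, show Complex.I * (1 * y) = (y:ℂ) * Complex.I by ring]
  rw [Complex.exp_mul_I, Complex.exp_mul_I]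
  simp [Complex.cos_neg, Complex.sin_neg, Ffun]
  ring

lemma sum_Omega (m : ℕ) (y : Fin m → ℝ) :
    ∑ ω ∈ Omega m, Complex.exp (Complex.I * (dotZ ω y : ℝ)) = ((∏ j, Ffun (y j) : ℝ) : ℂ) := by
  have h : ∀ ω : Fin m → ℤ, Complex.exp (Complex.I * (dotZ ω y : ℝ)) =
      ∏ j, Complex.exp (Complex.I * ((ω j : ℝ) * y j : ℝ)) := by
    intro ω
    rw [← Complex.exp_sum]
    congr 1
    rw [dotZ]
    push_cast
    rw [Finset.mul_sum]
  calc ∑ ω ∈ Omega m, Complex.exp (Complex.I * (dotZ ω y : ℝ))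
      = ∑ ω ∈ Omega m, ∏ j, Complex.exp (Complex.I * ((ω j : ℝ) * y j : ℝ)) := by
        exact Finset.sum_congr rfl fun ω _ => h ω
    _ = ∏ j, ∑ a ∈ ({-1,0,1} : Finset ℤ), Complex.exp (Complex.I * ((a : ℝ) * y j : ℝ)) := by
        simp only [Omega]
        exact (Finset.prod_univ_sum (fun _ : Fin m => ({-1,0,1} : Finset ℤ))
          (fun j a => Complex.exp (Complex.I * ((a : ℝ) * y j : ℝ)))).symm
    _ = ∏ j, ((Ffun (y j) : ℝ) : ℂ) := by
        exact Finset.prod_congr rfl fun j _ => sum_exp_three (y j)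
    _ = _ := by push_cast; rfl

lemma Kker_eq_prod (m : ℕ) (x z : Fin m → ℝ) :
    Kker m x z = ((2 * Real.pi) ^ m)⁻¹ * ∏ j, Ffun (x j - z j) := by
  rw [Kker, sum_Omega, Complex.ofReal_re]
  rfl

def lam : Fin 3 → ℝ → ℝ
  | 0, t => (1 - Real.cos t - Real.sin t) / 2
  | 1, t => Real.cos t
  | 2, t => (1 - Real.cos t + Real.sin t) / 2

lemma lam_zero (a : Fin 3) (h : a ≠ 1) : lam a 0 = 0 := by
  fin_cases a <;> simp_all [lam]

lemma Real.sin_pi_add' (x : ℝ) : Real.sin (Real.pi + x) = - Real.sin x := by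
  rw [Real.sin_add]; simp

lemma Ffun_interp (t z : ℝ) :
    Ffun (t - z) = ∑ a : Fin 3, lam a t * Ffun (Real.pi / 2 * (((a : ℕ) : ℝ) - 1) - z) := by
  rw [Fin.sum_univ_three]
  simp only [lam, Ffun]
  norm_num
  rw [show -(Real.pi/2) - z = Real.pi/2 - (Real.pi + z) by ring, Real.cos_pi_div_two_sub,
    Real.sin_pi_add', Real.cos_pi_div_two_sub, Real.cos_sub]
  ring

def Bmat : Matrix (Fin 3) (Fin 3) ℝ := !![3,1,-1;1,3,1;-1,1,3]
def Cmat : Matrix (Fin 3) (Fin 3) ℝ := !![1/2,-1/4,1/4; -1/4,1/2,-1/4; 1/4,-1/4,1/2]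

lemma Ffun_pt (a b : Fin 3) :
    Ffun (Real.pi / 2 * (((a : ℕ) : ℝ) - ((b : ℕ) : ℝ))) = Bmat a b := by
  fin_cases a <;> fin_cases b <;>
    · simp only [Ffun, Bmat]
      norm_num

lemma BC : Bmat * Cmat = 1 := by
  ext i j
  fin_cases i <;> fin_cases j <;>
    simp [Bmat, Cmat, Matrix.mul_apply, Fin.sum_univ_three, Matrix.one_apply] <;> norm_num

/-- The tensor interpolation: `K_p` is a combination of the `K_{pt3 s}`. -/
lemma Kfun_interp (m : ℕ) (p : Fin m → ℝ) :
    Kfun m p = ∑ s : Fin m → Fin 3, (∏ j, lam (s j) (p j)) • Kfun m (pt3 m s) := by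
  funext z
  rw [show (∑ s : Fin m → Fin 3, (∏ j, lam (s j) (p j)) • Kfun m (pt3 m s)) z
      = ∑ s : Fin m → Fin 3, (∏ j, lam (s j) (p j)) * Kfun m (pt3 m s) z by
    rw [Finset.sum_apply]; rfl]
  simp only [Kfun, Kker_eq_prod, pt3]
  calc ((2 * Real.pi) ^ m)⁻¹ * ∏ j, Ffun (p j - z j)
      = ((2 * Real.pi) ^ m)⁻¹ *
        ∏ j, ∑ a : Fin 3, lam a (p j) * Ffun (Real.pi / 2 * (((a : ℕ) : ℝ) - 1) - z j) := by
        rw [Finset.prod_congr rfl fun j _ => Ffun_interp (p j) (z j)]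
    _ = ((2 * Real.pi) ^ m)⁻¹ * ∑ s ∈ Fintype.piFinset (fun _ : Fin m => (Finset.univ : Finset (Fin 3))),
        ∏ j, lam (s j) (p j) * Ffun (Real.pi / 2 * (((s j : ℕ) : ℝ) - 1) - z j) := by
        rw [Finset.prod_univ_sum]
    _ = _ := by
        rw [Fintype.piFinset_univ, Finset.mul_sum]
        refine Finset.sum_congr rfl fun s _ => ?_
        rw [Finset.prod_mul_distrib]
        ring

lemma pt3_injective (m : ℕ) : Function.Injective (pt3 m) := by
  intro s s' h
  funext j
  have hj := congrFun h j
  simp only [pt3] at hj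
  have h2 := mul_left_cancel₀ (show (Real.pi / 2) ≠ 0 by positivity) hj
  have h3 : ((s j : ℕ) : ℝ) = ((s' j : ℕ) : ℝ) := by linarith
  exact Fin.ext (Nat.cast_injective h3)

lemma pt3_coord_ne_zero (m : ℕ) (s : Fin m → Fin 3) (j : Fin m) :
    pt3 m s j ≠ 0 ↔ s j ≠ 1 := by
  have hpi := Real.pi_pos
  constructor
  · intro h hs
    apply h
    simp [pt3, hs]
  · intro h hc
    apply h
    simp only [pt3, mul_eq_zero] at hc
    rcases hc with hc | hc
    · linarith
    · have : ((s j : ℕ) : ℝ) = 1 := by linarith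
      have : (s j : ℕ) = 1 := by exact_mod_cast this
      exact Fin.ext this

/-- The big Gram-type matrix. -/
def Mmat (m : ℕ) : Matrix (Fin m → Fin 3) (Fin m → Fin 3) ℝ :=
  fun s s' => Kker m (pt3 m s) (pt3 m s')

def Nmat (m : ℕ) : Matrix (Fin m → Fin 3) (Fin m → Fin 3) ℝ :=
  fun s s' => (2 * Real.pi) ^ m * ∏ j, Cmat (s j) (s' j)

lemma Mmat_eq (m : ℕ) (s s' : Fin m → Fin 3) :
    Mmat m s s' = ((2 * Real.pi) ^ m)⁻¹ * ∏ j, Bmat (s j) (s' j) := by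
  rw [Mmat, Kker_eq_prod]
  congr 1
  refine Finset.prod_congr rfl fun j _ => ?_
  rw [← Ffun_pt]
  congr 1
  simp only [pt3]
  ring

lemma two_pi_pow_ne (m : ℕ) : ((2 * Real.pi) ^ m) ≠ 0 := by
  positivity

lemma MN (m : ℕ) : Mmat m * Nmat m = 1 := by
  ext s s''
  rw [Matrix.mul_apply]
  calc ∑ s' : Fin m → Fin 3, Mmat m s s' * Nmat m s' s''
      = ∑ s' : Fin m → Fin 3, ∏ j, (Bmat (s j) (s' j) * Cmat (s' j) (s'' j)) := by
        refine Finset.sum_congr rfl fun s' _ => ?_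
        rw [Mmat_eq, Nmat, Finset.prod_mul_distrib]
        field_simp [two_pi_pow_ne m]
    _ = ∏ j, ∑ a : Fin 3, Bmat (s j) a * Cmat a (s'' j) := by
        rw [Finset.prod_univ_sum]
        rw [Fintype.piFinset_univ]
    _ = ∏ j, (1 : Matrix (Fin 3) (Fin 3) ℝ) (s j) (s'' j) := by
        refine Finset.prod_congr rfl fun j _ => ?_
        rw [← BC, Matrix.mul_apply]
    _ = (1 : Matrix (Fin m → Fin 3) (Fin m → Fin 3) ℝ) s s'' := by
        by_cases h : s = s''
        · subst h
          simp [Matrix.one_apply]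
        · have : ∃ j, s j ≠ s'' j := by
            by_contra hc
            push_neg at hc
            exact h (funext hc)
          obtain ⟨j, hj⟩ := this
          rw [Matrix.one_apply_ne h]
          exact Finset.prod_eq_zero (Finset.mem_univ j) (by simp [Matrix.one_apply, hj])

lemma Mmat_rows_li (m : ℕ) : LinearIndependent ℝ (fun s => Mmat m s) := by
  rw [Fintype.linearIndependent_iff]
  intro g hg s
  have hvm : Matrix.vecMul g (Mmat m) = 0 := by
    funext s'
    have := congrFun hg s'
    simpa [Matrix.vecMul, dotProduct, Finset.sum_apply] using this
  have : Matrix.vecMul g (Mmat m * Nmat m) = 0 := by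
    rw [← Matrix.vecMul_vecMul, hvm]
    simp
  rw [MN, Matrix.vecMul_one] at this
  exact congrFun this s

/-- Linear independence of the full grid family. -/
lemma Kgrid_li (m : ℕ) : LinearIndependent ℝ (fun s : Fin m → Fin 3 => Kfun m (pt3 m s)) := by
  apply LinearIndependent.of_comp (LinearMap.funLeft ℝ ℝ (pt3 m))
  have : (LinearMap.funLeft ℝ ℝ (pt3 m)) ∘ (fun s : Fin m → Fin 3 => Kfun m (pt3 m s))
      = fun s => Mmat m s := rfl
  rw [this]
  exact Mmat_rows_li m

end


/-- the family `(K_q)_{q ∈ ((π/2)·{-1,0,1}^m) ∩ I_d}` is a basis of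
`span_ℝ{K_p : p ∈ I_d}`: it is linearly independent and has the same span. -/
theorem Kgrid3_basis_of_span_Id (m : ℕ) (hm : 0 < m) (d : ℕ) (hd : d ≤ m) :
    LinearIndependent ℝ (fun q : ↥(grid3 m ∩ Iset m d) => Kfun m (q : Fin m → ℝ)) ∧
      Submodule.span ℝ (Kfun m '' (grid3 m ∩ Iset m d)) =
        Submodule.span ℝ (Kfun m '' Iset m d) := by
  constructor
  · -- linear independence
    have hli := Kgrid_li m
    have hσ : ∀ q : ↥(grid3 m ∩ Iset m d), ∃ s, pt3 m s = (q : Fin m → ℝ) := fun q => q.2.1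
    choose σ hσspec using hσ
    have hinj : Function.Injective σ := by
      intro q q' h
      apply Subtype.ext
      rw [← hσspec q, ← hσspec q', h]
    have heq : (fun q : ↥(grid3 m ∩ Iset m d) => Kfun m (q : Fin m → ℝ))
        = (fun s : Fin m → Fin 3 => Kfun m (pt3 m s)) ∘ σ := by
      funext q
      simp only [Function.comp_apply, hσspec q]
    rw [heq]
    exact hli.comp σ hinj
  · apply le_antisymm
    · exact Submodule.span_mono (Set.image_mono Set.inter_subset_right)
    · rw [Submodule.span_le]
      rintro _ ⟨p, hp, rfl⟩
      rw [Kfun_interp m p]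
      apply Submodule.sum_mem
      intro s _
      by_cases hc : (∏ j, lam (s j) (p j)) = 0
      · rw [hc, zero_smul]; exact Submodule.zero_mem _
      · apply Submodule.smul_mem
        apply Submodule.subset_span
        refine ⟨pt3 m s, ⟨⟨s, rfl⟩, ?_⟩, rfl⟩
        have hsub : {j : Fin m | pt3 m s j ≠ 0} ⊆ {j : Fin m | p j ≠ 0} := by
          intro j hj
          simp only [Set.mem_setOf_eq] at hj ⊢
          intro hp0
          apply hc
          apply Finset.prod_eq_zero (Finset.mem_univ j)
          rw [hp0]
          exact lam_zero _ ((pt3_coord_ne_zero m s j).mp hj)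
        have hpd : Set.ncard {j : Fin m | p j ≠ 0} ≤ d := hp
        calc Set.ncard {j : Fin m | pt3 m s j ≠ 0}
            ≤ Set.ncard {j : Fin m | p j ≠ 0} := Set.ncard_le_ncard hsub (Set.toFinite _)
          _ ≤ d := hpd
end
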